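/- arXiv:2004.04937 — 5 statements merged into one kernel-verified Lean document; each statement's English description precedes it below -/
import Mathlib

section
/- Let V be a finite-dimensional vector space over a finite field F_q and let α, β be functions from subspaces of V to a field with β(W) = Σ_{U ⊆ W} α(U) for all subspaces W. Then for all subspaces W ⊆ Y of V, Σ_{T : W ⊆ T ⊆ Y} (-1)^(dim Y - dim T) q^((dim Y - dim T)(dim Y - dim T - 1)/2) β(T) = Σ_{U : U + W = Y} α(U), where the right-hand sum is over all subspaces U of V whose span together with W is Y. -/
open scoped Classical

section Aux

set_option linter.unusedSectionVars false
set_option linter.unusedVariables false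

variable {𝔽 V : Type*} [Field 𝔽] [AddCommGroup V] [Module 𝔽 V] [FiniteDimensional 𝔽 V]

-- C: span inf
theorem aux_span_inf (S H : Submodule 𝔽 V) (hSH : S ≤ H) (v : V) (hv : v ∉ H) :
    (S ⊔ Submodule.span 𝔽 {v}) ⊓ H = S := by
  apply le_antisymm
  · rintro x ⟨hx1, hx2⟩
    obtain ⟨s, hs, t, ht, rfl⟩ := Submodule.mem_sup.mp hx1
    obtain ⟨c, rfl⟩ := Submodule.mem_span_singleton.mp ht
    by_cases hc : c = 0
    · simpa [hc] using hs
    · exact absurd (by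
        have : c • v = (s + c • v) - s := by abel
        have hmem : c • v ∈ H := this ▸ sub_mem hx2 (hSH hs)
        simpa [hc] using H.smul_mem c⁻¹ hmem) hv
  · exact le_inf le_sup_left hSH

-- D: dimension
theorem aux_dim (H Y T : Submodule 𝔽 V) (hHY : H ≤ Y)
    (hdim : Module.finrank 𝔽 H + 1 = Module.finrank 𝔽 Y)
    (hTY : T ≤ Y) (hTH : ¬ T ≤ H) :
    Module.finrank 𝔽 T = Module.finrank 𝔽 (T ⊓ H : Submodule 𝔽 V) + 1 := by
  have hsup : T ⊔ H = Y := by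
    have h1 : H < T ⊔ H := lt_of_le_of_ne le_sup_right (fun h => hTH (h ▸ le_sup_left))
    have h2 : T ⊔ H ≤ Y := sup_le hTY hHY
    have h3 : Module.finrank 𝔽 H < Module.finrank 𝔽 (T ⊔ H : Submodule 𝔽 V) :=
      Submodule.finrank_lt_finrank_of_lt h1
    have h4 : Module.finrank 𝔽 (T ⊔ H : Submodule 𝔽 V) ≤ Module.finrank 𝔽 Y :=
      Submodule.finrank_mono h2
    exact Submodule.eq_of_le_of_finrank_eq h2 (by omega)
  have := Submodule.finrank_sup_add_finrank_inf_eq T H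
  rw [hsup] at this
  omega

-- existence of hyperplane
theorem aux_hyp : ∀ (n : ℕ) (X Y : Submodule 𝔽 V), X ≤ Y →
    Module.finrank 𝔽 Y = Module.finrank 𝔽 X + n + 1 →
    ∃ H, X ≤ H ∧ H ≤ Y ∧ Module.finrank 𝔽 H + 1 = Module.finrank 𝔽 Y := by
  intro n
  induction n with
  | zero => exact fun X Y hXY h => ⟨X, le_refl X, hXY, h.symm⟩
  | succ n ih =>
    intro X Y hXY h
    have hlt : X < Y := lt_of_le_of_ne hXY (by rintro rfl; omega)
    obtain ⟨v, hvY, hvX⟩ := SetLike.exists_of_lt hlt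
    set X' := X ⊔ Submodule.span 𝔽 {v} with hX'
    have hinf : X ⊓ Submodule.span 𝔽 {v} = ⊥ := by
      rw [eq_bot_iff]
      rintro x ⟨hx1, hx2⟩
      obtain ⟨c, rfl⟩ := Submodule.mem_span_singleton.mp hx2
      by_cases hc : c = 0
      · simp [hc]
      · exact absurd (by simpa [hc] using X.smul_mem c⁻¹ hx1) hvX
    have hdX' : Module.finrank 𝔽 X' = Module.finrank 𝔽 X + 1 := by
      have := Submodule.finrank_sup_add_finrank_inf_eq X (Submodule.span 𝔽 {v})
      rw [← hX', hinf, finrank_bot, finrank_span_singleton (by rintro rfl; exact hvX X.zero_mem)] at this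
      omega
    have hX'Y : X' ≤ Y := sup_le hXY ((Submodule.span_singleton_le_iff_mem v Y).mpr hvY)
    obtain ⟨H, h1, h2, h3⟩ := ih X' Y hX'Y (by omega)
    exact ⟨H, le_trans le_sup_left h1, h2, h3⟩

theorem aux_arith (q n s : ℕ) (hq : 2 ≤ q) (h : s + 1 ≤ n) :
    q ^ n - q ^ (n - 1) = q ^ (n - 1 - s) * (q ^ (s + 1) - q ^ s) := by
  have h1 : q ^ (n - 1) = q ^ (n - 1 - s) * q ^ s := by
    rw [← pow_add]; congr 1; omega
  have h2 : q ^ n = q ^ (n - 1 - s) * q ^ (s + 1) := by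
    rw [← pow_add]; congr 1; omega
  rw [h1, h2, Nat.mul_sub]

theorem aux_pos (q s : ℕ) (hq : 2 ≤ q) : 0 < q ^ (s + 1) - q ^ s :=
  Nat.sub_pos_of_lt (Nat.pow_lt_pow_succ (by omega))

open Module Finset

theorem aux_count [Fintype 𝔽] [Fintype (Submodule 𝔽 V)] (q : ℕ) (hq : Fintype.card 𝔽 = q)
    (H Y S : Submodule 𝔽 V) (hHY : H ≤ Y)
    (hdim : finrank 𝔽 H + 1 = finrank 𝔽 Y) (hSH : S ≤ H) :
    (Finset.univ.filter (fun T : Submodule 𝔽 V => T ≤ Y ∧ ¬ T ≤ H ∧ T ⊓ H = S)).card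
      = q ^ (finrank 𝔽 Y - 1 - finrank 𝔽 S) := by
  have hq2 : 2 ≤ q := hq ▸ Fintype.one_lt_card
  haveI : Finite V := Module.finite_of_finite 𝔽
  haveI : Fintype V := Fintype.ofFinite V
  set n := finrank 𝔽 Y with hn
  set s := finrank 𝔽 S with hs
  have hsn : s + 1 ≤ n := by
    have := (Submodule.finrank_mono hSH : finrank 𝔽 S ≤ finrank 𝔽 H)
    omega
  have hcard : ∀ p : Submodule 𝔽 V, (Finset.univ.filter (fun v => v ∈ p)).card = q ^ finrank 𝔽 p := by
    intro p
    rw [show (Finset.univ.filter (fun v => v ∈ p)).card = Fintype.card p from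
      (Fintype.card_subtype _).symm, card_eq_pow_finrank (K := 𝔽) (V := p), hq]
  set Vs : Finset V := Finset.univ.filter (fun v => v ∈ Y ∧ v ∉ H) with hVs
  set Ts : Finset (Submodule 𝔽 V) :=
    Finset.univ.filter (fun T => T ≤ Y ∧ ¬ T ≤ H ∧ T ⊓ H = S) with hTs
  have hmaps : ∀ v ∈ Vs, S ⊔ Submodule.span 𝔽 {v} ∈ Ts := by
    intro v hv
    simp only [hVs, Finset.mem_filter, Finset.mem_univ, true_and] at hv
    obtain ⟨hvY, hvH⟩ := hv
    refine Finset.mem_filter.mpr ⟨Finset.mem_univ _, ?_, ?_, aux_span_inf S H hSH v hvH⟩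
    · exact sup_le (le_trans hSH hHY) ((Submodule.span_singleton_le_iff_mem v Y).mpr hvY)
    · intro hle
      exact hvH (hle (le_sup_right (a := S) (Submodule.mem_span_singleton_self v)))
  have hsplit := Finset.card_eq_sum_card_fiberwise hmaps
  have hfiber : ∀ T ∈ Ts, (Vs.filter (fun v => S ⊔ Submodule.span 𝔽 {v} = T)).card
      = q ^ (s + 1) - q ^ s := by
    intro T hT
    simp only [hTs, Finset.mem_filter, Finset.mem_univ, true_and] at hT
    obtain ⟨hTY, hTH, hTS⟩ := hT
    have hST : S ≤ T := hTS ▸ inf_le_left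
    have hdT : finrank 𝔽 T = s + 1 := by
      have := aux_dim H Y T hHY hdim hTY hTH
      rw [hTS] at this; omega
    have heq : Vs.filter (fun v => S ⊔ Submodule.span 𝔽 {v} = T)
        = Finset.univ.filter (fun v => v ∈ T) \ Finset.univ.filter (fun v => v ∈ S) := by
      ext v
      simp only [hVs, Finset.mem_filter, Finset.mem_sdiff, Finset.mem_univ, true_and]
      constructor
      · rintro ⟨⟨hvY, hvH⟩, rfl⟩
        refine ⟨le_sup_right (a := S) (Submodule.mem_span_singleton_self v), fun hvS => hvH (hSH hvS)⟩
      · rintro ⟨hvT, hvS⟩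
        have hvH : v ∉ H := fun hvH => hvS (hTS ▸ Submodule.mem_inf.mpr ⟨hvT, hvH⟩)
        have hle : S ⊔ Submodule.span 𝔽 {v} ≤ T :=
          sup_le hST ((Submodule.span_singleton_le_iff_mem v T).mpr hvT)
        have hd' : finrank 𝔽 (S ⊔ Submodule.span 𝔽 {v} : Submodule 𝔽 V) = s + 1 := by
          have h1 := aux_dim H Y (S ⊔ Submodule.span 𝔽 {v}) hHY hdim (le_trans hle hTY)
            (fun hc => hvH (hc (le_sup_right (a := S) (Submodule.mem_span_singleton_self v))))
          rw [aux_span_inf S H hSH v hvH] at h1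
          omega
        exact ⟨⟨hTY hvT, hvH⟩, Submodule.eq_of_le_of_finrank_eq hle (by rw [hd', hdT])⟩
    rw [heq, Finset.card_sdiff_of_subset (by
      intro v hv
      simp only [Finset.mem_filter, Finset.mem_univ, true_and] at hv ⊢
      exact hST hv), hcard, hcard, hdT]
  have hVscard : Vs.card = q ^ n - q ^ (n - 1) := by
    have heq : Vs = Finset.univ.filter (fun v => v ∈ Y) \ Finset.univ.filter (fun v => v ∈ H) := by
      ext v
      simp only [hVs, Finset.mem_filter, Finset.mem_sdiff, Finset.mem_univ, true_and]
    rw [heq, Finset.card_sdiff_of_subset (by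
      intro v hv
      simp only [Finset.mem_filter, Finset.mem_univ, true_and] at hv ⊢
      exact hHY hv), hcard, hcard, ← hn]
    congr 2
    omega
  rw [Finset.sum_congr rfl hfiber, Finset.sum_const, smul_eq_mul] at hsplit
  rw [hVscard, aux_arith q n s hq2 hsn] at hsplit
  exact Nat.eq_of_mul_eq_mul_right (aux_pos q s hq2) hsplit.symm

theorem aux_c {K : Type*} [Field K] (q k : ℕ) :
    (-1 : K) ^ (k + 1) * (q : K) ^ ((k + 1) * k / 2)
      = -((q : K) ^ k * ((-1 : K) ^ k * (q : K) ^ (k * (k - 1) / 2))) := by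
  have h : (k + 1) * k / 2 = k * (k - 1) / 2 + k := by
    have h1 : (k + 1) * k / 2 = (k + 1).choose 2 := by
      rw [Nat.choose_two_right]; simp
    have h2 : k * (k - 1) / 2 = k.choose 2 := (Nat.choose_two_right k).symm
    have h3 : (k + 1).choose 2 = k.choose 1 + k.choose 2 := Nat.choose_succ_succ k 1
    rw [h1, h2, h3, Nat.choose_one_right]
    omega
  rw [h, pow_add, pow_succ]
  ring

theorem aux_key {K : Type*} [Field K] [Fintype 𝔽] [Fintype (Submodule 𝔽 V)]
    (q : ℕ) (hq : Fintype.card 𝔽 = q) (X Y : Submodule 𝔽 V) :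
    (∑ T ∈ Finset.univ.filter (fun T : Submodule 𝔽 V => X ≤ T ∧ T ≤ Y),
        (-1 : K) ^ (finrank 𝔽 Y - finrank 𝔽 T)
          * (q : K) ^ ((finrank 𝔽 Y - finrank 𝔽 T) * (finrank 𝔽 Y - finrank 𝔽 T - 1) / 2))
      = if X = Y then 1 else 0 := by
  set c : ℕ → K := fun k => (-1 : K) ^ k * (q : K) ^ (k * (k - 1) / 2) with hc
  by_cases hXY : X ≤ Y
  · by_cases hXeqY : X = Y
    · subst hXeqY
      rw [if_pos rfl]
      have : Finset.univ.filter (fun T : Submodule 𝔽 V => X ≤ T ∧ T ≤ X) = {X} := by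
        ext T
        simp only [Finset.mem_filter, Finset.mem_univ, true_and, Finset.mem_singleton]
        exact ⟨fun ⟨h1, h2⟩ => le_antisymm h2 h1, fun h => by simp [h]⟩
      rw [this, Finset.sum_singleton]
      simp
    · rw [if_neg hXeqY]
      have hlt : X < Y := lt_of_le_of_ne hXY hXeqY
      have hfr : finrank 𝔽 X < finrank 𝔽 Y := Submodule.finrank_lt_finrank_of_lt hlt
      obtain ⟨H, hXH, hHY, hdim⟩ := aux_hyp (finrank 𝔽 Y - finrank 𝔽 X - 1) X Y hXY (by omega)
      rw [← Finset.sum_filter_add_sum_filter_not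
            (Finset.univ.filter (fun T : Submodule 𝔽 V => X ≤ T ∧ T ≤ Y)) (fun T => T ≤ H)]
      set B := Finset.univ.filter (fun S : Submodule 𝔽 V => X ≤ S ∧ S ≤ H) with hB
      have hpart1 : ((Finset.univ.filter (fun T : Submodule 𝔽 V => X ≤ T ∧ T ≤ Y)).filter
            (fun T => T ≤ H)) = B := by
        ext T
        simp only [hB, Finset.mem_filter, Finset.mem_univ, true_and]
        exact ⟨fun ⟨⟨h1, _⟩, h3⟩ => ⟨h1, h3⟩, fun ⟨h1, h2⟩ => ⟨⟨h1, le_trans h2 hHY⟩, h2⟩⟩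
      have hmaps : ∀ T ∈ (Finset.univ.filter (fun T : Submodule 𝔽 V => X ≤ T ∧ T ≤ Y)).filter
            (fun T => ¬ T ≤ H), T ⊓ H ∈ B := by
        intro T hT
        simp only [hB, Finset.mem_filter, Finset.mem_univ, true_and] at hT ⊢
        exact ⟨le_inf hT.1.1 hXH, inf_le_right⟩
      rw [← Finset.sum_fiberwise_of_maps_to hmaps, hpart1, ← Finset.sum_add_distrib]
      apply Finset.sum_eq_zero
      intro S hS
      simp only [hB, Finset.mem_filter, Finset.mem_univ, true_and] at hS
      obtain ⟨hXS, hSH⟩ := hS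
      have hfS : finrank 𝔽 S ≤ finrank 𝔽 H := Submodule.finrank_mono hSH
      -- first term
      have h1 : (-1 : K) ^ (finrank 𝔽 Y - finrank 𝔽 S)
            * (q : K) ^ ((finrank 𝔽 Y - finrank 𝔽 S) * (finrank 𝔽 Y - finrank 𝔽 S - 1) / 2)
          = -((q : K) ^ (finrank 𝔽 H - finrank 𝔽 S) * c (finrank 𝔽 H - finrank 𝔽 S)) := by
        have he : finrank 𝔽 Y - finrank 𝔽 S = (finrank 𝔽 H - finrank 𝔽 S) + 1 := by omega
        rw [he, hc]
        have := aux_c (K := K) q (finrank 𝔽 H - finrank 𝔽 S)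
        simpa using this
      -- second term: fiber sum
      have hfib : ((Finset.univ.filter (fun T : Submodule 𝔽 V => X ≤ T ∧ T ≤ Y)).filter
              (fun T => ¬ T ≤ H)).filter (fun T => T ⊓ H = S)
          = Finset.univ.filter (fun T : Submodule 𝔽 V => T ≤ Y ∧ ¬ T ≤ H ∧ T ⊓ H = S) := by
        ext T
        simp only [Finset.mem_filter, Finset.mem_univ, true_and]
        constructor
        · rintro ⟨⟨⟨_, h2⟩, h3⟩, h4⟩
          exact ⟨h2, h3, h4⟩
        · rintro ⟨h2, h3, h4⟩
          exact ⟨⟨⟨le_trans hXS (h4 ▸ inf_le_left), h2⟩, h3⟩, h4⟩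
      have h2 : (∑ T ∈ ((Finset.univ.filter (fun T : Submodule 𝔽 V => X ≤ T ∧ T ≤ Y)).filter
              (fun T => ¬ T ≤ H)).filter (fun T => T ⊓ H = S),
            (-1 : K) ^ (finrank 𝔽 Y - finrank 𝔽 T)
              * (q : K) ^ ((finrank 𝔽 Y - finrank 𝔽 T) * (finrank 𝔽 Y - finrank 𝔽 T - 1) / 2))
          = (q : K) ^ (finrank 𝔽 H - finrank 𝔽 S) * c (finrank 𝔽 H - finrank 𝔽 S) := by
        rw [hfib]
        have hterm : ∀ T ∈ Finset.univ.filter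
              (fun T : Submodule 𝔽 V => T ≤ Y ∧ ¬ T ≤ H ∧ T ⊓ H = S),
            (-1 : K) ^ (finrank 𝔽 Y - finrank 𝔽 T)
              * (q : K) ^ ((finrank 𝔽 Y - finrank 𝔽 T) * (finrank 𝔽 Y - finrank 𝔽 T - 1) / 2)
            = c (finrank 𝔽 H - finrank 𝔽 S) := by
          intro T hT
          simp only [Finset.mem_filter, Finset.mem_univ, true_and] at hT
          obtain ⟨hTY, hTH, hTS⟩ := hT
          have hdT := aux_dim H Y T hHY hdim hTY hTH
          rw [hTS] at hdT
          have he : finrank 𝔽 Y - finrank 𝔽 T = finrank 𝔽 H - finrank 𝔽 S := by omega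
          rw [he, hc]
        rw [Finset.sum_congr rfl hterm, Finset.sum_const,
          aux_count q hq H Y S hHY hdim hSH, nsmul_eq_mul]
        have he2 : finrank 𝔽 Y - 1 - finrank 𝔽 S = finrank 𝔽 H - finrank 𝔽 S := by omega
        rw [he2]
        push_cast [Nat.cast_pow]
        ring
      rw [h1, h2]
      ring
  · have hempty : Finset.univ.filter (fun T : Submodule 𝔽 V => X ≤ T ∧ T ≤ Y) = ∅ := by
      ext T
      simp only [Finset.mem_filter, Finset.mem_univ, true_and, Finset.notMem_empty,
        iff_false]
      rintro ⟨h1, h2⟩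
      exact hXY (le_trans h1 h2)
    rw [hempty, Finset.sum_empty, if_neg (by rintro rfl; exact hXY le_rfl)]

theorem moebius_inversion_interval'
    {K : Type*} [Field K] [Fintype 𝔽] [Fintype (Submodule 𝔽 V)]
    (q : ℕ) (hq : Fintype.card 𝔽 = q)
    (α β : Submodule 𝔽 V → K)
    (hβ : ∀ W : Submodule 𝔽 V,
      β W = ∑ U ∈ Finset.univ.filter (fun U : Submodule 𝔽 V => U ≤ W), α U) :
    ∀ W Y : Submodule 𝔽 V, W ≤ Y →
      (∑ T ∈ Finset.univ.filter (fun T : Submodule 𝔽 V => W ≤ T ∧ T ≤ Y),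
        (-1 : K) ^ (Module.finrank 𝔽 Y - Module.finrank 𝔽 T)
          * (q : K) ^ ((Module.finrank 𝔽 Y - Module.finrank 𝔽 T)
              * (Module.finrank 𝔽 Y - Module.finrank 𝔽 T - 1) / 2)
          * β T)
      = ∑ U ∈ Finset.univ.filter (fun U : Submodule 𝔽 V => U ⊔ W = Y), α U := by
  intro W Y hWY
  set μ : Submodule 𝔽 V → K := fun T =>
    (-1 : K) ^ (finrank 𝔽 Y - finrank 𝔽 T)
      * (q : K) ^ ((finrank 𝔽 Y - finrank 𝔽 T) * (finrank 𝔽 Y - finrank 𝔽 T - 1) / 2) with hμ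
  set A := Finset.univ.filter (fun T : Submodule 𝔽 V => W ≤ T ∧ T ≤ Y) with hA
  have h1 : (∑ T ∈ A, μ T * β T)
      = ∑ T ∈ A, ∑ U ∈ Finset.univ, (if U ≤ T then μ T * α U else 0) := by
    refine Finset.sum_congr rfl (fun T _ => ?_)
    rw [hβ T, Finset.sum_filter, Finset.mul_sum]
    exact Finset.sum_congr rfl (fun U _ => by split <;> simp)
  rw [h1, Finset.sum_comm]
  have h2 : ∀ U : Submodule 𝔽 V,
      (∑ T ∈ A, (if U ≤ T then μ T * α U else 0))
        = (if U ⊔ W = Y then 1 else 0) * α U := by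
    intro U
    rw [← Finset.sum_filter]
    have hset : A.filter (fun T => U ≤ T)
        = Finset.univ.filter (fun T : Submodule 𝔽 V => U ⊔ W ≤ T ∧ T ≤ Y) := by
      ext T
      simp only [hA, Finset.mem_filter, Finset.mem_univ, true_and, sup_le_iff]
      tauto
    rw [hset, ← Finset.sum_mul, aux_key q hq (U ⊔ W) Y]
  rw [Finset.sum_congr rfl (fun U _ => h2 U)]
  rw [Finset.sum_congr rfl (fun U _ => ite_zero_mul (U ⊔ W = Y) (1 : K) (α U)), ← Finset.sum_filter]
  exact Finset.sum_congr rfl (fun U _ => one_mul (α U))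

end Aux

theorem moebius_inversion_interval
    {𝔽 V K : Type*} [Field 𝔽] [Fintype 𝔽] [Field K]
    [AddCommGroup V] [Module 𝔽 V] [FiniteDimensional 𝔽 V]
    [Fintype (Submodule 𝔽 V)]
    (q : ℕ) (hq : Fintype.card 𝔽 = q)
    (α β : Submodule 𝔽 V → K)
    (hβ : ∀ W : Submodule 𝔽 V,
      β W = ∑ U ∈ Finset.univ.filter (fun U : Submodule 𝔽 V => U ≤ W), α U) :
    ∀ W Y : Submodule 𝔽 V, W ≤ Y →
      (∑ T ∈ Finset.univ.filter (fun T : Submodule 𝔽 V => W ≤ T ∧ T ≤ Y),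
        (-1 : K) ^ (Module.finrank 𝔽 Y - Module.finrank 𝔽 T)
          * (q : K) ^ ((Module.finrank 𝔽 Y - Module.finrank 𝔽 T)
              * (Module.finrank 𝔽 Y - Module.finrank 𝔽 T - 1) / 2)
          * β T)
      = ∑ U ∈ Finset.univ.filter (fun U : Submodule 𝔽 V => U ⊔ W = Y), α U := by
  exact moebius_inversion_interval' q hq α β hβ
end

section
/- Let V be an n-dimensional vector space over a finite field F_q, and let α, β be functions from subspaces of V to a field with β the zeta transform of α (i.e., β(W) = Σ_{U ⊆ W} α(U)). Let g be a nonnegative integer. Then the following are equivalent: (i) α(U) = 0 for every subspace U with dim(U) ≥ g; (ii) for all subspaces W ⊆ Y with dim(Y) - dim(W) ≥ g, Σ_{T : W ⊆ T ⊆ Y} (-1)^(dim Y - dim T) q^((dim Y - dim T)(dim Y - dim T - 1)/2) β(T) = 0. -/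
open scoped Classical
open Module Finset Polynomial

set_option linter.unusedSectionVars false
set_option synthInstance.maxHeartbeats 1000000
set_option maxHeartbeats 1000000


section Aux

variable {𝔽 : Type*} [Field 𝔽] [Fintype 𝔽]

lemma injective_iff_li {W X : Type*} [AddCommGroup W] [Module 𝔽 W]
    [AddCommGroup X] [Module 𝔽 X] {ι : Type*} [Fintype ι] (b : Basis ι 𝔽 W)
    (f : W →ₗ[𝔽] X) :
    Function.Injective f ↔ LinearIndependent 𝔽 (f ∘ b) := by
  constructor
  · intro hf
    exact b.linearIndependent.map' f (LinearMap.ker_eq_bot.2 hf)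
  · intro h
    rw [← LinearMap.ker_eq_bot, eq_bot_iff]
    intro x hx
    have hz := Fintype.linearIndependent_iff.1 h (fun i => b.repr x i) ?_
    · have : x = ∑ i, b.repr x i • b i := (b.sum_repr x).symm
      simp only [hz, zero_smul, Finset.sum_const_zero] at this
      simpa using this
    · have : f x = 0 := hx
      calc ∑ i, b.repr x i • (f ∘ b) i = f (∑ i, b.repr x i • b i) := by
            simp only [map_sum, map_smul, Function.comp]
        _ = f x := by rw [b.sum_repr x]
        _ = 0 := this

lemma card_inj {W : Type*} [AddCommGroup W] [Module 𝔽 W] [FiniteDimensional 𝔽 W] (d : ℕ) :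
    Nat.card {f : W →ₗ[𝔽] (Fin d → 𝔽) // Function.Injective f} =
      ∏ i ∈ Finset.range (finrank 𝔽 W), (Fintype.card 𝔽 ^ d - Fintype.card 𝔽 ^ i) := by
  set c := finrank 𝔽 W with hc
  by_cases hcd : c ≤ d
  · let b : Basis (Fin c) 𝔽 W := finBasis 𝔽 W
    have hsymm : ∀ f : W →ₗ[𝔽] (Fin d → 𝔽), (b.constr 𝔽).symm f = f ∘ b := by
      intro f
      rw [LinearEquiv.symm_apply_eq]
      exact (b.constr_eq 𝔽 fun i => rfl).symm
    have e : {f : W →ₗ[𝔽] (Fin d → 𝔽) // Function.Injective f} ≃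
        {v : Fin c → (Fin d → 𝔽) // LinearIndependent 𝔽 v} :=
      Equiv.subtypeEquiv (b.constr 𝔽).symm.toEquiv (by
        intro f
        simp only [LinearEquiv.coe_toEquiv, hsymm]
        exact injective_iff_li b f)
    rw [Nat.card_congr e]
    have hfr : finrank 𝔽 (Fin d → 𝔽) = d := by simp
    have := card_linearIndependent (K := 𝔽) (V := Fin d → 𝔽) (k := c) (by rw [hfr]; exact hcd)
    rw [this]
    rw [← Fin.prod_univ_eq_prod_range (fun i => Fintype.card 𝔽 ^ d - Fintype.card 𝔽 ^ i) c]
    simp [hfr]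
  · have : IsEmpty {f : W →ₗ[𝔽] (Fin d → 𝔽) // Function.Injective f} := by
      constructor
      rintro ⟨f, hf⟩
      have := LinearMap.finrank_le_finrank_of_injective hf
      rw [finrank_pi, Fintype.card_fin] at this
      omega
    rw [Nat.card_of_isEmpty]
    refine (Finset.prod_eq_zero (Finset.mem_range.2 (by omega : d < c)) ?_).symm
    simp

end Aux

section C
variable {𝔽 : Type*} [Field 𝔽] [Fintype 𝔽]
variable {M : Type*} [AddCommGroup M] [Module 𝔽 M] [FiniteDimensional 𝔽 M]

/-- maps with given kernel correspond to injective maps from the quotient -/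
noncomputable def fiberEquiv (T : Submodule 𝔽 M) (X : Type*) [AddCommGroup X] [Module 𝔽 X] :
    {f : M →ₗ[𝔽] X // LinearMap.ker f = T} ≃ {g : (M ⧸ T) →ₗ[𝔽] X // Function.Injective g} where
  toFun f := ⟨T.liftQ f.1 f.2.ge, by
    rw [← LinearMap.ker_eq_bot]
    exact Submodule.ker_liftQ_eq_bot T f.1 f.2.ge f.2.le⟩
  invFun g := ⟨g.1.comp T.mkQ, by
    rw [LinearMap.ker_comp, LinearMap.ker_eq_bot.2 g.2, Submodule.comap_bot, Submodule.ker_mkQ]⟩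
  left_inv f := Subtype.ext (T.liftQ_mkQ f.1 f.2.ge)
  right_inv g := Subtype.ext (by
    apply Submodule.linearMap_qext
    exact T.liftQ_mkQ (g.1.comp T.mkQ) _)

lemma card_fiber (T : Submodule 𝔽 M) (d : ℕ) :
    Nat.card {f : M →ₗ[𝔽] (Fin d → 𝔽) // LinearMap.ker f = T} =
      ∏ i ∈ Finset.range (finrank 𝔽 M - finrank 𝔽 T),
        (Fintype.card 𝔽 ^ d - Fintype.card 𝔽 ^ i) := by
  rw [Nat.card_congr (fiberEquiv T (Fin d → 𝔽)), card_inj]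
  have h1 := Submodule.finrank_quotient_add_finrank T
  have h3 : finrank 𝔽 (M ⧸ T) = finrank 𝔽 M - finrank 𝔽 T := by omega
  rw [h3]

lemma total_count [Fintype (Submodule 𝔽 M)] (d : ℕ) :
    ∑ T : Submodule 𝔽 M, ∏ i ∈ Finset.range (finrank 𝔽 M - finrank 𝔽 T),
        (Fintype.card 𝔽 ^ d - Fintype.card 𝔽 ^ i) =
      (Fintype.card 𝔽 ^ d) ^ finrank 𝔽 M := by
  have hfinM : Finite M := Module.finite_of_finite 𝔽
  have hfin : Finite (M →ₗ[𝔽] (Fin d → 𝔽)) :=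
    Finite.of_injective (fun f => (f : M → Fin d → 𝔽)) DFunLike.coe_injective
  have h1 : ∑ T : Submodule 𝔽 M, ∏ i ∈ Finset.range (finrank 𝔽 M - finrank 𝔽 T),
        (Fintype.card 𝔽 ^ d - Fintype.card 𝔽 ^ i)
      = ∑ T : Submodule 𝔽 M,
          Nat.card {f : M →ₗ[𝔽] (Fin d → 𝔽) // LinearMap.ker f = T} := by
    exact Finset.sum_congr rfl fun T _ => (card_fiber T d).symm
  rw [h1]
  have h2 : ∑ T : Submodule 𝔽 M,
      Nat.card {f : M →ₗ[𝔽] (Fin d → 𝔽) // LinearMap.ker f = T}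
      = Nat.card (M →ₗ[𝔽] (Fin d → 𝔽)) := by
    haveI := Fintype.ofFinite (M →ₗ[𝔽] (Fin d → 𝔽))
    simp only [Nat.card_eq_fintype_card]
    rw [← Fintype.card_sigma]
    exact Fintype.card_congr (Equiv.sigmaFiberEquiv (fun f => LinearMap.ker f))
  rw [h2]
  -- card of all linear maps
  let b : Basis (Fin (finrank 𝔽 M)) 𝔽 M := finBasis 𝔽 M
  rw [Nat.card_congr (b.constr 𝔽 (M' := Fin d → 𝔽)).symm.toEquiv]
  simp [Nat.card_eq_fintype_card, Fintype.card_fun, pow_mul]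
end C
section D
variable {𝔽 : Type*} [Field 𝔽] [Fintype 𝔽]
variable {M : Type*} [AddCommGroup M] [Module 𝔽 M] [FiniteDimensional 𝔽 M]

lemma cast_prod (q d c : ℕ) (hq : 1 ≤ q) :
    ((∏ i ∈ range c, (q ^ d - q ^ i) : ℕ) : ℤ) =
      ∏ i ∈ range c, ((q : ℤ) ^ d - (q : ℤ) ^ i) := by
  by_cases hcd : c ≤ d
  · rw [Nat.cast_prod]
    refine Finset.prod_congr rfl fun i hi => ?_
    have : q ^ i ≤ q ^ d :=
      Nat.pow_le_pow_right hq (le_trans (Nat.le_of_lt_succ (Nat.lt_succ_of_lt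
        (Finset.mem_range.1 hi))) (by omega))
    push_cast [Nat.cast_sub this]
    ring
  · have hd : d ∈ range c := Finset.mem_range.2 (by omega)
    rw [Finset.prod_eq_zero hd (by simp), Finset.prod_eq_zero hd (by simp)]
    simp

lemma poly_id [Fintype (Submodule 𝔽 M)] :
    (∑ T : Submodule 𝔽 M, ∏ i ∈ range (finrank 𝔽 M - finrank 𝔽 T),
        ((X : ℤ[X]) - C ((Fintype.card 𝔽 : ℤ) ^ i))) = (X : ℤ[X]) ^ finrank 𝔽 M := by
  set q := Fintype.card 𝔽 with hqdef
  have hq2 : 1 < q := Fintype.one_lt_card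
  rw [← sub_eq_zero]
  apply Polynomial.eq_zero_of_infinite_isRoot
  have hroot : ∀ d : ℕ, IsRoot (∑ T : Submodule 𝔽 M, ∏ i ∈ range (finrank 𝔽 M - finrank 𝔽 T),
      ((X : ℤ[X]) - C ((q : ℤ) ^ i)) - (X : ℤ[X]) ^ finrank 𝔽 M) ((q : ℤ) ^ d) := by
    intro d
    have hcount := total_count (𝔽 := 𝔽) (M := M) d
    have : (((q ^ d) ^ finrank 𝔽 M : ℕ) : ℤ) =
        ∑ T : Submodule 𝔽 M, ∏ i ∈ range (finrank 𝔽 M - finrank 𝔽 T),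
          ((q : ℤ) ^ d - (q : ℤ) ^ i) := by
      rw [← hcount, Nat.cast_sum]
      exact Finset.sum_congr rfl fun T _ => cast_prod q d _ (le_of_lt hq2)
    simp only [IsRoot, eval_sub, eval_pow, eval_X, eval_finset_sum, eval_prod, eval_sub,
      eval_pow, eval_X, eval_C]
    push_cast at this
    rw [← this]
    push_cast
    ring
  refine Set.Infinite.mono ?_ (Set.infinite_range_of_injective
    (f := fun d : ℕ => (q : ℤ) ^ d) ?_)
  · rintro x ⟨d, rfl⟩
    exact hroot d
  · exact (pow_right_strictMono₀ (by exact_mod_cast hq2)).injective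

lemma abs_id [Fintype (Submodule 𝔽 M)] :
    (∑ T : Submodule 𝔽 M, (-1 : ℤ) ^ (finrank 𝔽 M - finrank 𝔽 T) *
        (Fintype.card 𝔽 : ℤ) ^ ((finrank 𝔽 M - finrank 𝔽 T) *
          ((finrank 𝔽 M - finrank 𝔽 T) - 1) / 2)) =
      if finrank 𝔽 M = 0 then 1 else 0 := by
  have h := congrArg (Polynomial.eval (0 : ℤ)) (poly_id (𝔽 := 𝔽) (M := M))
  simp only [eval_finset_sum, eval_prod, eval_sub, eval_X, eval_C, eval_pow, zero_sub] at h
  have hL : ∀ T : Submodule 𝔽 M,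
      (∏ i ∈ range (finrank 𝔽 M - finrank 𝔽 T), (-(Fintype.card 𝔽 : ℤ) ^ i)) =
      (-1 : ℤ) ^ (finrank 𝔽 M - finrank 𝔽 T) *
        (Fintype.card 𝔽 : ℤ) ^ ((finrank 𝔽 M - finrank 𝔽 T) *
          ((finrank 𝔽 M - finrank 𝔽 T) - 1) / 2) := by
    intro T
    rw [show (fun i => -(Fintype.card 𝔽 : ℤ) ^ i) = fun i => (-1) * (Fintype.card 𝔽 : ℤ) ^ i
      from funext fun i => by ring]
    rw [Finset.prod_mul_distrib, Finset.prod_const, Finset.prod_pow_eq_pow_sum,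
      Finset.sum_range_id, Finset.card_range]
  rw [Finset.sum_congr rfl fun T _ => hL T] at h
  rw [h, zero_pow_eq]
end D
section E
variable {𝔽 : Type*} [Field 𝔽] [Fintype 𝔽]
variable {V : Type*} [AddCommGroup V] [Module 𝔽 V] [FiniteDimensional 𝔽 V]
  [Fintype (Submodule 𝔽 V)]

lemma key_interval {K : Type*} [Field K] (W Y : Submodule 𝔽 V) (hWY : W ≤ Y) :
    (∑ T ∈ Finset.univ.filter (fun T : Submodule 𝔽 V => W ≤ T ∧ T ≤ Y),
      (-1 : K) ^ (finrank 𝔽 Y - finrank 𝔽 T) *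
        (Fintype.card 𝔽 : K) ^ ((finrank 𝔽 Y - finrank 𝔽 T) *
          (finrank 𝔽 Y - finrank 𝔽 T - 1) / 2))
    = if W = Y then 1 else 0 := by
  classical
  set W₀ : Submodule 𝔽 Y := W.comap Y.subtype with hW₀
  have hfinV : Finite V := Module.finite_of_finite 𝔽
  have hfinQ : Finite (Y ⧸ W₀) := Finite.of_surjective _ W₀.mkQ_surjective
  haveI : Fintype (Submodule 𝔽 (Y ⧸ W₀)) := Fintype.ofFinite _
  set mq := finrank 𝔽 (Y ⧸ W₀) with hmq
  -- basic facts
  have hWmap : W₀.map Y.subtype = W := by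
    rw [hW₀, Submodule.map_comap_subtype, inf_eq_right.2 hWY]
  have hW₀W : finrank 𝔽 W₀ = finrank 𝔽 W := (Submodule.comapSubtypeEquivOfLe hWY).finrank_eq
  have hYfr : mq + finrank 𝔽 W = finrank 𝔽 Y := by
    rw [← hW₀W]; exact Submodule.finrank_quotient_add_finrank W₀
  set i : Submodule 𝔽 (Y ⧸ W₀) → Submodule 𝔽 V :=
    fun S => (S.comap W₀.mkQ).map Y.subtype with hi
  set j : Submodule 𝔽 V → Submodule 𝔽 (Y ⧸ W₀) :=
    fun T => (T.comap Y.subtype).map W₀.mkQ with hj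
  have hker : ∀ S : Submodule 𝔽 (Y ⧸ W₀), W₀ ≤ S.comap W₀.mkQ := by
    intro S x hx
    have hx0 : W₀.mkQ x = 0 := (Submodule.Quotient.mk_eq_zero W₀).2 hx
    simp [Submodule.mem_comap, hx0]
  have hi_mem : ∀ S, W ≤ i S ∧ i S ≤ Y := by
    intro S
    constructor
    · rw [← hWmap]; exact Submodule.map_mono (hker S)
    · exact Submodule.map_subtype_le _ _
  have hfr : ∀ S : Submodule 𝔽 (Y ⧸ W₀), finrank 𝔽 (i S) = finrank 𝔽 S + finrank 𝔽 W := by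
    intro S
    set Cs := S.comap W₀.mkQ with hCs
    have h1 : finrank 𝔽 (i S) = finrank 𝔽 Cs :=
      ((Submodule.equivMapOfInjective Y.subtype Subtype.val_injective Cs).finrank_eq).symm
    set f : Cs →ₗ[𝔽] (Y ⧸ W₀) := W₀.mkQ.comp Cs.subtype with hf
    have hrange : LinearMap.range f = S := by
      rw [hf, LinearMap.range_comp, Submodule.range_subtype,
        Submodule.map_comap_eq_of_surjective W₀.mkQ_surjective]
    have hkerf : LinearMap.ker f = W₀.comap Cs.subtype := by
      rw [hf, LinearMap.ker_comp, Submodule.ker_mkQ]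
    have h2 : finrank 𝔽 (LinearMap.ker f) = finrank 𝔽 W := by
      rw [hkerf, ← hW₀W]
      exact (Submodule.comapSubtypeEquivOfLe (hker S)).finrank_eq
    have h3 := LinearMap.finrank_range_add_finrank_ker f
    rw [hrange, h2] at h3
    rw [h1, ← h3]
  have hji : ∀ S, j (i S) = S := by
    intro S
    rw [hj, hi]
    simp only
    rw [Submodule.comap_map_eq_of_injective Subtype.val_injective,
      Submodule.map_comap_eq_of_surjective W₀.mkQ_surjective]
  have hij : ∀ T : Submodule 𝔽 V, W ≤ T → T ≤ Y → i (j T) = T := by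
    intro T hWT hTY
    rw [hi, hj]
    simp only
    rw [Submodule.comap_map_mkQ, sup_eq_right.2 ?_, Submodule.map_comap_subtype,
      inf_eq_right.2 hTY]
    rw [hW₀]
    exact Submodule.comap_mono hWT
  -- transfer the sum
  have htrans : (∑ T ∈ Finset.univ.filter (fun T : Submodule 𝔽 V => W ≤ T ∧ T ≤ Y),
      (-1 : K) ^ (finrank 𝔽 Y - finrank 𝔽 T) *
        (Fintype.card 𝔽 : K) ^ ((finrank 𝔽 Y - finrank 𝔽 T) *
          (finrank 𝔽 Y - finrank 𝔽 T - 1) / 2))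
      = ∑ S : Submodule 𝔽 (Y ⧸ W₀),
        (-1 : K) ^ (mq - finrank 𝔽 S) *
          (Fintype.card 𝔽 : K) ^ ((mq - finrank 𝔽 S) * (mq - finrank 𝔽 S - 1) / 2) := by
    refine Finset.sum_nbij' (fun T => j T) (fun S => i S) ?_ ?_ ?_ ?_ ?_
    · intro T _; exact Finset.mem_univ _
    · intro S _
      simp only [Finset.mem_filter, Finset.mem_univ, true_and]
      exact hi_mem S
    · intro T hT
      simp only [Finset.mem_filter, Finset.mem_univ, true_and] at hT
      exact hij T hT.1 hT.2
    · intro S _; exact hji S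
    · intro T hT
      simp only [Finset.mem_filter, Finset.mem_univ, true_and] at hT
      have h1 : finrank 𝔽 (i (j T)) = finrank 𝔽 (j T) + finrank 𝔽 W := hfr (j T)
      rw [hij T hT.1 hT.2] at h1
      have h2 : finrank 𝔽 Y - finrank 𝔽 T = mq - finrank 𝔽 (j T) := by
        have h4 : finrank 𝔽 (j T) ≤ mq := Submodule.finrank_le _
        omega
      rw [h2]
  rw [htrans]
  -- apply the absolute identity, cast from ℤ
  have habs := abs_id (𝔽 := 𝔽) (M := Y ⧸ W₀)
  have hcast := congrArg (fun z : ℤ => (z : K)) habs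
  push_cast at hcast
  rw [← hmq] at hcast
  rw [hcast]
  have hiff : mq = 0 ↔ W = Y := by
    constructor
    · intro h
      refine Submodule.eq_of_le_of_finrank_le hWY ?_
      omega
    · intro h; rw [h] at hYfr; omega
  by_cases h0 : mq = 0
  · rw [if_pos h0, if_pos (hiff.1 h0)]
  · rw [if_neg h0, if_neg (fun h => h0 (hiff.2 h))]
end E
section Main
variable {𝔽 : Type*} [Field 𝔽] [Fintype 𝔽]
variable {V : Type*} [AddCommGroup V] [Module 𝔽 V] [FiniteDimensional 𝔽 V]
  [Fintype (Submodule 𝔽 V)]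

lemma swap_sum {K : Type*} [Field K] (P : Submodule 𝔽 V → Prop) [DecidablePred P]
    (c α : Submodule 𝔽 V → K) :
    (∑ T ∈ Finset.univ.filter P,
        c T * (∑ U ∈ Finset.univ.filter (fun U => U ≤ T), α U)) =
      ∑ U : Submodule 𝔽 V,
        (∑ T ∈ Finset.univ.filter (fun T => P T ∧ U ≤ T), c T) * α U := by
  have h1 : (∑ T ∈ Finset.univ.filter P,
      c T * (∑ U ∈ Finset.univ.filter (fun U => U ≤ T), α U)) =
      ∑ T ∈ Finset.univ.filter P, ∑ U ∈ Finset.univ.filter (fun U => U ≤ T), c T * α U := by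
    exact Finset.sum_congr rfl fun T _ => Finset.mul_sum _ _ _
  rw [h1, Finset.sum_comm' (t' := Finset.univ)
    (s' := fun U => Finset.univ.filter (fun T => P T ∧ U ≤ T)) ?_]
  · exact Finset.sum_congr rfl fun U _ => (Finset.sum_mul _ _ _).symm
  · intro T U
    simp only [Finset.mem_filter, Finset.mem_univ, true_and, and_true]
end Main

theorem vanishing_iff_interval_sums_vanish
    {𝔽 V K : Type*} [Field 𝔽] [Fintype 𝔽] [Field K]
    [AddCommGroup V] [Module 𝔽 V] [FiniteDimensional 𝔽 V]
    [Fintype (Submodule 𝔽 V)]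
    (q n : ℕ) (hq : Fintype.card 𝔽 = q) (hn : Module.finrank 𝔽 V = n)
    (g : ℕ)
    (α β : Submodule 𝔽 V → K)
    (hβ : ∀ W : Submodule 𝔽 V,
      β W = ∑ U ∈ Finset.univ.filter (fun U : Submodule 𝔽 V => U ≤ W), α U) :
    (∀ U : Submodule 𝔽 V, g ≤ Module.finrank 𝔽 U → α U = 0)
    ↔ (∀ W Y : Submodule 𝔽 V, W ≤ Y →
        g ≤ Module.finrank 𝔽 Y - Module.finrank 𝔽 W →
        (∑ T ∈ Finset.univ.filter (fun T : Submodule 𝔽 V => W ≤ T ∧ T ≤ Y),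
          (-1 : K) ^ (Module.finrank 𝔽 Y - Module.finrank 𝔽 T)
            * (q : K) ^ ((Module.finrank 𝔽 Y - Module.finrank 𝔽 T)
                * (Module.finrank 𝔽 Y - Module.finrank 𝔽 T - 1) / 2)
            * β T) = 0) := by
  subst hq
  set c : Submodule 𝔽 V → Submodule 𝔽 V → K := fun Y T =>
    (-1 : K) ^ (finrank 𝔽 Y - finrank 𝔽 T)
      * (Fintype.card 𝔽 : K) ^ ((finrank 𝔽 Y - finrank 𝔽 T)
          * (finrank 𝔽 Y - finrank 𝔽 T - 1) / 2) with hc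
  have hswap : ∀ (W Y : Submodule 𝔽 V),
      (∑ T ∈ Finset.univ.filter (fun T : Submodule 𝔽 V => W ≤ T ∧ T ≤ Y),
        c Y T * β T) =
      ∑ U : Submodule 𝔽 V,
        (∑ T ∈ Finset.univ.filter (fun T => (W ≤ T ∧ T ≤ Y) ∧ U ≤ T), c Y T) * α U := by
    intro W Y
    rw [Finset.sum_congr rfl (fun T _ => by rw [hβ T])]
    exact swap_sum (fun T => W ≤ T ∧ T ≤ Y) (c Y) α
  constructor
  · intro hα W Y hWY hg
    rw [show (∑ T ∈ Finset.univ.filter (fun T : Submodule 𝔽 V => W ≤ T ∧ T ≤ Y),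
        (-1 : K) ^ (finrank 𝔽 Y - finrank 𝔽 T)
          * (Fintype.card 𝔽 : K) ^ ((finrank 𝔽 Y - finrank 𝔽 T)
              * (finrank 𝔽 Y - finrank 𝔽 T - 1) / 2) * β T)
        = ∑ T ∈ Finset.univ.filter (fun T : Submodule 𝔽 V => W ≤ T ∧ T ≤ Y),
            c Y T * β T from rfl, hswap W Y]
    apply Finset.sum_eq_zero
    intro U _
    by_cases hUY : U ≤ Y
    · have hfil : Finset.univ.filter (fun T : Submodule 𝔽 V => (W ≤ T ∧ T ≤ Y) ∧ U ≤ T)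
          = Finset.univ.filter (fun T => (W ⊔ U) ≤ T ∧ T ≤ Y) := by
        apply Finset.filter_congr
        intro T _
        simp only [sup_le_iff]
        tauto
      rw [hfil, key_interval (W ⊔ U) Y (sup_le hWY hUY)]
      by_cases hsup : W ⊔ U = Y
      · rw [if_pos hsup, one_mul]
        apply hα
        have hd := Submodule.finrank_sup_add_finrank_inf_eq W U
        rw [hsup] at hd
        have h1 : finrank 𝔽 W ≤ finrank 𝔽 Y := Submodule.finrank_mono hWY
        omega
      · rw [if_neg hsup, zero_mul]
    · rw [Finset.filter_false_of_mem, Finset.sum_empty, zero_mul]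
      intro T _
      rintro ⟨⟨_, hTY⟩, hUT⟩
      exact hUY (le_trans hUT hTY)
  · intro h U hgU
    have h0 := h ⊥ U bot_le (by rw [finrank_bot]; omega)
    rw [show (∑ T ∈ Finset.univ.filter (fun T : Submodule 𝔽 V => ⊥ ≤ T ∧ T ≤ U),
        (-1 : K) ^ (finrank 𝔽 U - finrank 𝔽 T)
          * (Fintype.card 𝔽 : K) ^ ((finrank 𝔽 U - finrank 𝔽 T)
              * (finrank 𝔽 U - finrank 𝔽 T - 1) / 2) * β T)
        = ∑ T ∈ Finset.univ.filter (fun T : Submodule 𝔽 V => ⊥ ≤ T ∧ T ≤ U),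
            c U T * β T from rfl, hswap ⊥ U] at h0
    have hsimp : ∀ U' : Submodule 𝔽 V,
        (∑ T ∈ Finset.univ.filter (fun T => (⊥ ≤ T ∧ T ≤ U) ∧ U' ≤ T), c U T) * α U'
        = (if U' = U then 1 else 0) * α U' := by
      intro U'
      by_cases hU'U : U' ≤ U
      · have hfil : Finset.univ.filter (fun T : Submodule 𝔽 V => (⊥ ≤ T ∧ T ≤ U) ∧ U' ≤ T)
            = Finset.univ.filter (fun T => U' ≤ T ∧ T ≤ U) := by
          apply Finset.filter_congr
          intro T _
          simp only [bot_le, true_and]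
          tauto
        rw [hfil, key_interval U' U hU'U]
      · have hfil : Finset.univ.filter (fun T : Submodule 𝔽 V => (⊥ ≤ T ∧ T ≤ U) ∧ U' ≤ T)
            = ∅ := by
          apply Finset.filter_false_of_mem
          intro T _
          rintro ⟨⟨_, hTU⟩, hUT⟩
          exact hU'U (le_trans hUT hTU)
        rw [hfil, Finset.sum_empty, if_neg (by rintro rfl; exact hU'U le_rfl)]
    rw [Finset.sum_congr rfl (fun U' _ => hsimp U')] at h0
    simp only [ite_mul, one_mul, zero_mul, Finset.sum_ite_eq', Finset.mem_univ,
      if_true] at h0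
    exact h0
end

section
/- Let Q ≥ 2 be a natural number, b a prime, and r, s natural numbers with 1 ≤ r, s ≤ b-1 and r·s ≡ 1 (mod b). Then [r]_Q · [s]_{Q^r} = [rs]_Q ≡ 1 (mod [b]_Q); consequently [r]_Q is invertible modulo [b]_Q, i.e., gcd([r]_Q, [b]_Q) = 1. -/
/-- The q-integer `[m]_Q = 1 + Q + ⋯ + Q^(m-1)`. -/
def qint (Q m : ℕ) : ℕ := ∑ i ∈ Finset.range m, Q ^ i

lemma qint_add (Q m n : ℕ) : qint Q (m + n) = qint Q m + Q ^ m * qint Q n := by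
  unfold qint
  rw [Finset.sum_range_add, Finset.mul_sum]
  simp [pow_add]

lemma qint_mul (Q r s : ℕ) : qint Q r * qint (Q ^ r) s = qint Q (r * s) := by
  induction s with
  | zero => simp [qint]
  | succ s ih =>
    have h1 : qint (Q ^ r) (s + 1) = qint (Q ^ r) s + (Q ^ r) ^ s := by
      unfold qint; rw [Finset.sum_range_succ]
    rw [h1, Nat.mul_succ, qint_add, mul_add, ih, ← pow_mul]
    ring

lemma qint_pos (Q m : ℕ) (hQ : 1 ≤ Q) (hm : 1 ≤ m) : 1 ≤ qint Q m := by
  unfold qint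
  calc 1 = Q ^ 0 := by simp
  _ ≤ ∑ i ∈ Finset.range m, Q ^ i :=
    Finset.single_le_sum (f := fun i => Q ^ i) (fun i _ => Nat.zero_le _)
      (Finset.mem_range.mpr hm)

lemma qint_mod (Q b k : ℕ) : qint Q (1 + k * b) ≡ 1 [MOD qint Q b] := by
  induction k with
  | zero => simp [qint, Nat.ModEq.refl]
  | succ k ih =>
    have : 1 + (k + 1) * b = (1 + k * b) + b := by ring
    rw [this, qint_add]
    calc qint Q (1 + k * b) + Q ^ (1 + k * b) * qint Q b
        ≡ qint Q (1 + k * b) + 0 [MOD qint Q b] :=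
          Nat.ModEq.add_left _ ((Nat.modEq_zero_iff_dvd).mpr (dvd_mul_left _ _))
      _ = qint Q (1 + k * b) := by ring
      _ ≡ 1 [MOD qint Q b] := ih

/-- For a prime `b` and `r·s ≡ 1 (mod b)` with `1 ≤ r,s ≤ b-1`:
`[r]_Q · [s]_{Q^r} = [rs]_Q ≡ 1 (mod [b]_Q)`, hence `gcd([r]_Q, [b]_Q) = 1`. -/
theorem qint_invertible_mod (Q b r s : ℕ) (hQ : 2 ≤ Q) (hb : b.Prime)
    (hr : 1 ≤ r) (hr' : r ≤ b - 1) (hs : 1 ≤ s) (hs' : s ≤ b - 1)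
    (hrs : r * s ≡ 1 [MOD b]) :
    qint Q r * qint (Q ^ r) s = qint Q (r * s)
    ∧ qint Q (r * s) ≡ 1 [MOD qint Q b]
    ∧ Nat.gcd (qint Q r) (qint Q b) = 1 := by
  have hQ1 : 1 ≤ Q := by omega
  have hb1 : 1 < b := hb.one_lt
  -- write r*s = 1 + k*b
  have hrs1 : 1 ≤ r * s := Nat.one_le_iff_ne_zero.mpr (by positivity)
  have hk : ∃ k, r * s = 1 + k * b := by
    have h := (Nat.modEq_iff_dvd' hrs1).mp hrs.symm
    obtain ⟨k, hk⟩ := h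
    exact ⟨k, by rw [Nat.mul_comm k b]; omega⟩
  obtain ⟨k, hk⟩ := hk
  have h1 : qint Q r * qint (Q ^ r) s = qint Q (r * s) := qint_mul Q r s
  have h2 : qint Q (r * s) ≡ 1 [MOD qint Q b] := by rw [hk]; exact qint_mod Q b k
  refine ⟨h1, h2, ?_⟩
  have hrspos : 1 ≤ qint Q (r * s) := qint_pos Q _ hQ1 hrs1
  have hdvd : qint Q b ∣ qint Q (r * s) - 1 := (Nat.modEq_iff_dvd' hrspos).mp h2.symm
  have hd1 : Nat.gcd (qint Q r) (qint Q b) ∣ qint Q (r * s) := by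
    exact dvd_trans (Nat.gcd_dvd_left _ _) ⟨qint (Q ^ r) s, h1.symm⟩
  have hd2 : Nat.gcd (qint Q r) (qint Q b) ∣ qint Q (r * s) - 1 :=
    dvd_trans (Nat.gcd_dvd_right _ _) hdvd
  have : Nat.gcd (qint Q r) (qint Q b) ∣ 1 := by
    have := Nat.dvd_sub hd1 hd2
    rwa [Nat.sub_sub_self hrspos] at this
  exact Nat.dvd_one.mp this
end

section
/- Let q be a prime power, V an n-dimensional vector space over F_q, K = {k_1 < ... < k_r} and L = {μ_1, ..., μ_s} disjoint subsets of {0, 1, ..., b-1}, and suppose there is a prime p such that the multiplicative order of q modulo p is exactly b. Let F be a family of subspaces of V such that each member's dimension is congruent mod b to some element of K, and the dimension of the intersection of any two distinct members is congruent mod b to some element of L. Then |F| ≤ Σ_{j=s-r+1}^{s} [n choose j]_q + Σ_{t=1}^{r} [n choose k_t]_q, and if moreover s < k_1 + r then |F| ≤ Σ_{j=s-r+1}^{s} [n choose j]_q. -/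
/-- The Gaussian binomial coefficient `[n choose d]_q`, via the q-Pascal rule
(it is `0` when `d > n`). -/
def qchoose (q : ℕ) : ℕ → ℕ → ℕ
  | _, 0 => 1
  | 0, _ + 1 => 0
  | n + 1, k + 1 => qchoose q n k + q ^ (k + 1) * qchoose q n (k + 1)

open Finset in
lemma qchoose_int_identity (q : ℕ) : ∀ m j : ℕ,
    (∏ i ∈ range j, ((q:ℤ)^j - (q:ℤ)^i)) * qchoose q m j
      = ∏ i ∈ range j, ((q:ℤ)^m - (q:ℤ)^i) := by
  intro m
  induction m with
  | zero =>
    intro j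
    match j with
    | 0 => simp [qchoose]
    | j+1 =>
      rw [show qchoose q 0 (j+1) = 0 from rfl]
      rw [Finset.prod_range_succ' (f := fun i => (q:ℤ)^0 - (q:ℤ)^i)]
      simp
  | succ m IH =>
    intro j
    match j with
    | 0 => simp [qchoose]
    | j+1 =>
      have IH1 := IH j
      have IH2 := IH (j+1)
      have hd : ∏ i ∈ range (j+1), ((q:ℤ)^(j+1) - (q:ℤ)^i)
          = ((q:ℤ)^(j+1) - 1) * (q:ℤ)^j * ∏ i ∈ range j, ((q:ℤ)^j - (q:ℤ)^i) := by
        rw [Finset.prod_range_succ' (f := fun i => (q:ℤ)^(j+1) - (q:ℤ)^i)]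
        have : ∀ i ∈ range j, (q:ℤ)^(j+1) - (q:ℤ)^(i+1) = (q:ℤ) * ((q:ℤ)^j - (q:ℤ)^i) := by
          intro i _; ring
        rw [Finset.prod_congr rfl this, Finset.prod_mul_distrib, Finset.prod_const,
          Finset.card_range]
        ring
      have hF1 : ∏ i ∈ range (j+1), ((q:ℤ)^(m+1) - (q:ℤ)^i)
          = ((q:ℤ)^(m+1) - 1) * (q:ℤ)^j * ∏ i ∈ range j, ((q:ℤ)^m - (q:ℤ)^i) := by
        rw [Finset.prod_range_succ' (f := fun i => (q:ℤ)^(m+1) - (q:ℤ)^i)]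
        have : ∀ i ∈ range j, (q:ℤ)^(m+1) - (q:ℤ)^(i+1) = (q:ℤ) * ((q:ℤ)^m - (q:ℤ)^i) := by
          intro i _; ring
        rw [Finset.prod_congr rfl this, Finset.prod_mul_distrib, Finset.prod_const,
          Finset.card_range]
        ring
      have hF2 : ∏ i ∈ range (j+1), ((q:ℤ)^m - (q:ℤ)^i)
          = ((q:ℤ)^m - (q:ℤ)^j) * ∏ i ∈ range j, ((q:ℤ)^m - (q:ℤ)^i) :=
        by rw [Finset.prod_range_succ]; ring
      rw [show qchoose q (m+1) (j+1) = qchoose q m j + q^(j+1) * qchoose q m (j+1) from rfl]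
      rw [hF1, hd]
      push_cast
      rw [hF2, hd] at IH2
      linear_combination ((q:ℤ)^(j+1) - 1) * (q:ℤ)^j * IH1 + (q:ℤ)^(j+1) * IH2



open Finset Module Submodule

section Counting
variable {𝔽 V : Type*} [Field 𝔽] [Fintype 𝔽] [AddCommGroup V] [Module 𝔽 V] [FiniteDimensional 𝔽 V]

open scoped Classical
set_option maxHeartbeats 1000000

lemma card_dim_filter_mul (j : ℕ) [Fintype V] [Fintype (Submodule 𝔽 V)] :
    ((Finset.univ.filter fun A : Submodule 𝔽 V => finrank 𝔽 ↥A = j).card : ℤ)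
        * ∏ i ∈ range j, ((Fintype.card 𝔽 : ℤ)^j - (Fintype.card 𝔽 : ℤ)^i)
      = ∏ i ∈ range j, ((Fintype.card 𝔽 : ℤ)^(finrank 𝔽 V) - (Fintype.card 𝔽 : ℤ)^i) := by
  set q := Fintype.card 𝔽 with hq
  set n := finrank 𝔽 V with hn
  have hq1 : 1 ≤ q := Fintype.card_pos
  rcases le_or_gt j n with hj | hj
  · -- main case
    have hcount := card_linearIndependent (K := 𝔽) (V := V) (k := j) hj
    rw [Nat.card_eq_fintype_card] at hcount
    -- fiber equivalence
    have fiber : ∀ A : Submodule 𝔽 V, finrank 𝔽 ↥A = j →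
        (Finset.univ.filter
          (fun s : {s : Fin j → V // LinearIndependent 𝔽 s} =>
            Submodule.span 𝔽 (Set.range s.val) = A)).card
        = ∏ i : Fin j, (q ^ j - q ^ (i : ℕ)) := by
      intro A hA
      have hAcount := card_linearIndependent (K := 𝔽) (V := ↥A) (k := j) (le_of_eq hA.symm)
      rw [hA] at hAcount
      rw [Nat.card_eq_fintype_card] at hAcount
      rw [← hAcount, ← Fintype.card_subtype]
      apply Fintype.card_congr
      refine ⟨fun s => ⟨fun i => ⟨s.val.val i, ?_⟩, ?_⟩,
              fun t => ⟨⟨fun i => (t.val i : V), ?_⟩, ?_⟩, ?_, ?_⟩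
      · have h := Submodule.subset_span (R := 𝔽) (Set.mem_range_self (f := s.val.val) i)
        rw [s.prop] at h; exact h
      · exact LinearIndependent.of_comp A.subtype (by exact s.val.prop)
      · exact (t.prop.map' A.subtype (Submodule.ker_subtype A))
      · show Submodule.span 𝔽 (Set.range fun i => (A.subtype (t.val i))) = A
        have h2 : (Set.range fun i => A.subtype (t.val i)) = A.subtype '' Set.range t.val := by
          rw [← Set.range_comp]; rfl
        rw [h2, ← Submodule.map_span]
        have hspan : Submodule.span 𝔽 (Set.range t.val) = ⊤ := by
          apply Submodule.eq_top_of_finrank_eq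
          rw [finrank_span_eq_card t.prop, Fintype.card_fin, hA]
        rw [hspan, Submodule.map_top, Submodule.range_subtype]
      · intro s; ext i; rfl
      · intro t; ext i; rfl
    have hmap : ∀ s : {s : Fin j → V // LinearIndependent 𝔽 s},
        Submodule.span 𝔽 (Set.range s.val) ∈
          (Finset.univ.filter fun A : Submodule 𝔽 V => finrank 𝔽 ↥A = j) := by
      intro s
      simp only [Finset.mem_filter, Finset.mem_univ, true_and]
      rw [finrank_span_eq_card s.prop, Fintype.card_fin]
    have hfib := Finset.card_eq_sum_card_fiberwise
      (s := (Finset.univ : Finset {s : Fin j → V // LinearIndependent 𝔽 s}))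
      (t := Finset.univ.filter fun A : Submodule 𝔽 V => finrank 𝔽 ↥A = j)
      (f := fun s => Submodule.span 𝔽 (Set.range s.val)) (by intro s _; exact hmap s)
    have hsum : ∀ A ∈ (Finset.univ.filter fun A : Submodule 𝔽 V => finrank 𝔽 ↥A = j),
        (Finset.univ.filter
          (fun s : {s : Fin j → V // LinearIndependent 𝔽 s} =>
            Submodule.span 𝔽 (Set.range s.val) = A)).card
          = ∏ i : Fin j, (q ^ j - q ^ (i : ℕ)) := by
      intro A hA
      exact fiber A (by simpa using hA)
    rw [Finset.sum_congr rfl hsum, Finset.sum_const, smul_eq_mul] at hfib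
    -- now cast to ℤ
    have cast1 : ((∏ i : Fin j, (q ^ n - q ^ (i:ℕ)) : ℕ) : ℤ)
        = ∏ i ∈ range j, ((q:ℤ)^n - (q:ℤ)^i) := by
      rw [Fin.prod_univ_eq_prod_range (fun i => q ^ n - q ^ i) j, Nat.cast_prod]
      refine Finset.prod_congr rfl fun i hi => ?_
      rw [Nat.cast_sub (Nat.pow_le_pow_right hq1 (le_trans (le_of_lt (mem_range.mp hi)) hj))]
      push_cast; ring
    have cast2 : ((∏ i : Fin j, (q ^ j - q ^ (i:ℕ)) : ℕ) : ℤ)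
        = ∏ i ∈ range j, ((q:ℤ)^j - (q:ℤ)^i) := by
      rw [Fin.prod_univ_eq_prod_range (fun i => q ^ j - q ^ i) j, Nat.cast_prod]
      refine Finset.prod_congr rfl fun i hi => ?_
      rw [Nat.cast_sub (Nat.pow_le_pow_right hq1 (le_of_lt (mem_range.mp hi)))]
      push_cast; ring
    rw [← cast1, ← cast2, ← Nat.cast_mul, Nat.cast_inj, ← hfib, Finset.card_univ]
    exact hcount
  · -- j > n : both sides zero
    have hempty : (Finset.univ.filter fun A : Submodule 𝔽 V => finrank 𝔽 ↥A = j) = ∅ := by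
      apply Finset.filter_false_of_mem
      intro A _
      exact fun h => absurd (h ▸ Submodule.finrank_le A) (not_le.mpr hj)
    rw [hempty]
    simp only [Finset.card_empty, Nat.cast_zero, zero_mul]
    exact (Finset.prod_eq_zero (Finset.mem_range.mpr hj) (by ring)).symm

lemma card_dim_eq (j : ℕ) [Fintype V] [Fintype (Submodule 𝔽 V)] :
    (Finset.univ.filter fun A : Submodule 𝔽 V => finrank 𝔽 ↥A = j).card
      = qchoose (Fintype.card 𝔽) (finrank 𝔽 V) j := by
  set q := Fintype.card 𝔽 with hq
  have h2 : (1:ℤ) < (q:ℤ) := by exact_mod_cast Fintype.one_lt_card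
  have hD : (∏ i ∈ range j, ((q:ℤ)^j - (q:ℤ)^i)) ≠ 0 := by
    rw [Finset.prod_ne_zero_iff]
    intro i hi
    have : (q:ℤ)^i < (q:ℤ)^j :=
      pow_lt_pow_right₀ h2 (Finset.mem_range.mp hi)
    omega
  have h1 := card_dim_filter_mul (𝔽 := 𝔽) (V := V) j
  have h2' := qchoose_int_identity q (finrank 𝔽 V) j
  rw [mul_comm] at h1
  have := h1.trans h2'.symm
  exact_mod_cast mul_left_cancel₀ hD this

lemma card_lines_mul (Y : Submodule 𝔽 V) [Fintype V] [Fintype (Submodule 𝔽 V)] :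
    (Finset.univ.filter fun L : Submodule 𝔽 V => finrank 𝔽 ↥L = 1 ∧ L ≤ Y).card
        * (Fintype.card 𝔽 - 1) + 1
      = Fintype.card 𝔽 ^ finrank 𝔽 ↥Y := by
  set q := Fintype.card 𝔽 with hq
  set S : Finset V := Finset.univ.filter (fun v => v ∈ Y ∧ v ≠ 0) with hS
  have hScard : S.card = q ^ finrank 𝔽 ↥Y - 1 := by
    have h1 : S = (Finset.univ.filter (fun v : V => v ∈ Y)).erase 0 := by
      ext v
      simp only [hS, Finset.mem_filter, Finset.mem_univ, true_and, Finset.mem_erase]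
      tauto
    have h2 : (Finset.univ.filter (fun v : V => v ∈ Y)).card = q ^ finrank 𝔽 ↥Y := by
      rw [← Fintype.card_subtype]
      rw [card_eq_pow_finrank (K := 𝔽) (V := ↥Y)]
    rw [h1, Finset.card_erase_of_mem (by simp [Y.zero_mem]), h2]
  have hmem : ∀ v ∈ S, Submodule.span 𝔽 {v} ∈
      (Finset.univ.filter fun L : Submodule 𝔽 V => finrank 𝔽 ↥L = 1 ∧ L ≤ Y) := by
    intro v hv
    simp only [hS, Finset.mem_filter, Finset.mem_univ, true_and] at hv ⊢
    exact ⟨finrank_span_singleton hv.2, (Submodule.span_singleton_le_iff_mem v Y).mpr hv.1⟩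
  have hfib := Finset.card_eq_sum_card_fiberwise hmem
  have hfibcard : ∀ L ∈ (Finset.univ.filter
      fun L : Submodule 𝔽 V => finrank 𝔽 ↥L = 1 ∧ L ≤ Y),
      (S.filter fun v => Submodule.span 𝔽 {v} = L).card = q - 1 := by
    intro L hL
    simp only [Finset.mem_filter, Finset.mem_univ, true_and] at hL
    have h1 : S.filter (fun v => Submodule.span 𝔽 {v} = L)
        = (Finset.univ.filter (fun v : V => v ∈ L)).erase 0 := by
      ext v
      simp only [hS, Finset.mem_filter, Finset.mem_univ, true_and, Finset.mem_erase,
        Finset.filter_filter]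
      constructor
      · rintro ⟨⟨hvY, hv0⟩, hsp⟩
        exact ⟨hv0, hsp ▸ Submodule.mem_span_singleton_self v⟩
      · rintro ⟨hv0, hvL⟩
        have hsp : Submodule.span 𝔽 {v} = L := by
          apply Submodule.eq_of_le_of_finrank_le
            ((Submodule.span_singleton_le_iff_mem v L).mpr hvL)
          rw [hL.1, finrank_span_singleton hv0]
        exact ⟨⟨hL.2 hvL, hv0⟩, hsp⟩
    have h2 : (Finset.univ.filter (fun v : V => v ∈ L)).card = q ^ finrank 𝔽 ↥L := by
      rw [← Fintype.card_subtype]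
      rw [card_eq_pow_finrank (K := 𝔽) (V := ↥L)]
    rw [h1, Finset.card_erase_of_mem (by simp [L.zero_mem]), h2, hL.1, pow_one]
  rw [Finset.sum_congr rfl hfibcard, Finset.sum_const, smul_eq_mul] at hfib
  rw [← hfib, hScard]
  have : 1 ≤ q ^ finrank 𝔽 ↥Y := Nat.one_le_pow _ _ Fintype.card_pos
  omega

end Counting

namespace RWcore
variable {𝔽 V : Type*} [Field 𝔽] [Fintype 𝔽] [AddCommGroup V] [Module 𝔽 V] [FiniteDimensional 𝔽 V]

open scoped Classical

variable (p : ℕ)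

/-- incidence vector of a subspace -/
noncomputable def E (A : Submodule 𝔽 V) : Submodule 𝔽 V → ZMod p :=
  fun U => if A ≤ U then 1 else 0

lemma E_mul (A B : Submodule 𝔽 V) : E p A * E p B = E p (A ⊔ B) := by
  funext U
  simp only [Pi.mul_apply, E, sup_le_iff]
  by_cases h1 : A ≤ U <;> by_cases h2 : B ≤ U <;> simp [h1, h2]

lemma E_bot : E (𝔽 := 𝔽) (V := V) p ⊥ = 1 := by
  funext U; simp [E]

/-- span of incidence vectors of subspaces of dimension at most `d` -/
noncomputable def Espan (d : ℕ) : Submodule (ZMod p) ((Submodule 𝔽 V) → ZMod p) :=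
  Submodule.span (ZMod p) (E p '' {A : Submodule 𝔽 V | finrank 𝔽 ↥A ≤ d})

lemma Espan_mono {d d' : ℕ} (h : d ≤ d') : Espan (𝔽 := 𝔽) (V := V) p d ≤ Espan p d' :=
  Submodule.span_mono (Set.image_mono (fun A hA => le_trans hA h))

lemma E_mem_Espan {A : Submodule 𝔽 V} {d : ℕ} (h : finrank 𝔽 ↥A ≤ d) :
    E p A ∈ Espan p d :=
  Submodule.subset_span ⟨A, h, rfl⟩

lemma finrank_sup_le (A B : Submodule 𝔽 V) :
    finrank 𝔽 ↥(A ⊔ B) ≤ finrank 𝔽 ↥A + finrank 𝔽 ↥B := by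
  have := Submodule.finrank_sup_add_finrank_inf_eq A B
  omega

lemma Espan_mul {d1 d2 : ℕ} {f g : (Submodule 𝔽 V) → ZMod p}
    (hf : f ∈ Espan p d1) (hg : g ∈ Espan p d2) : f * g ∈ Espan p (d1 + d2) := by
  induction hf using Submodule.span_induction with
  | mem f hf =>
    obtain ⟨A, hA, rfl⟩ := hf
    induction hg using Submodule.span_induction with
    | mem g hg =>
      obtain ⟨B, hB, rfl⟩ := hg
      rw [E_mul]
      exact E_mem_Espan p (le_trans (finrank_sup_le A B) (Nat.add_le_add hA hB))
    | zero => rw [mul_zero]; exact Submodule.zero_mem _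
    | add g1 g2 _ _ h1 h2 => rw [mul_add]; exact Submodule.add_mem _ h1 h2
    | smul c g1 _ h1 => rw [mul_smul_comm]; exact Submodule.smul_mem _ c h1
  | zero => rw [zero_mul]; exact Submodule.zero_mem _
  | add f1 f2 _ _ h1 h2 => rw [add_mul]; exact Submodule.add_mem _ h1 h2
  | smul c f1 _ h1 => rw [smul_mul_assoc]; exact Submodule.smul_mem _ c h1

lemma Espan_prod {ι : Type*} (T : Finset ι) (f : ι → (Submodule 𝔽 V) → ZMod p)
    (h : ∀ i ∈ T, f i ∈ Espan p 1) : ∏ i ∈ T, f i ∈ Espan p T.card := by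
  induction T using Finset.induction_on with
  | empty =>
    rw [Finset.prod_empty, Finset.card_empty, ← E_bot p]
    exact E_mem_Espan p (by simp)
  | @insert x T' hx ih =>
    rw [Finset.prod_insert hx, Finset.card_insert_of_notMem hx]
    have := Espan_mul p (h x (Finset.mem_insert_self x T'))
      (ih (fun i hi => h i (Finset.mem_insert_of_mem hi)))
    rwa [Nat.add_comm] at this

/-- the key factor function lies in the degree-1 span -/
lemma factor_mem [Fintype V] [Fintype (Submodule 𝔽 V)] (c : ZMod p) (W : Submodule 𝔽 V) :
    (fun U : Submodule 𝔽 V => ((Fintype.card 𝔽 : ZMod p))^(finrank 𝔽 ↥(U ⊓ W)) - c)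
      ∈ Espan p 1 := by
  classical
  set q := Fintype.card 𝔽 with hq
  set lines : Finset (Submodule 𝔽 V) :=
    Finset.univ.filter (fun L : Submodule 𝔽 V => finrank 𝔽 ↥L = 1 ∧ L ≤ W) with hlines
  have key : (fun U : Submodule 𝔽 V => ((q : ZMod p))^(finrank 𝔽 ↥(U ⊓ W)) - c)
      = ((q : ZMod p) - 1) • (∑ L ∈ lines, E p L) + (1 - c) • E p ⊥ := by
    funext U
    have hcount : (lines.filter (fun L => L ≤ U)).card * (q - 1) + 1
        = q ^ finrank 𝔽 ↥(U ⊓ W) := by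
      have h1 : lines.filter (fun L => L ≤ U)
          = Finset.univ.filter (fun L : Submodule 𝔽 V => finrank 𝔽 ↥L = 1 ∧ L ≤ U ⊓ W) := by
        ext L
        simp only [hlines, Finset.filter_filter, Finset.mem_filter, Finset.mem_univ, true_and,
          le_inf_iff]
        tauto
      rw [h1]
      exact card_lines_mul (U ⊓ W)
    have hsum : (∑ L ∈ lines, E p L) U = ((lines.filter (fun L => L ≤ U)).card : ZMod p) := by
      rw [Finset.sum_apply]
      simp [E, Finset.sum_boole]
    simp only [Pi.add_apply, Pi.smul_apply, smul_eq_mul, hsum, E_bot, Pi.one_apply]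
    have hq1 : (1:ℕ) ≤ q := Fintype.card_pos
    have hthis : ((lines.filter (fun L => L ≤ U)).card : ZMod p) * ((q : ZMod p) - 1) + 1
        = ((q : ZMod p))^(finrank 𝔽 ↥(U ⊓ W)) := by
      have h := congrArg (fun x : ℕ => (x : ZMod p)) hcount
      push_cast [Nat.cast_sub hq1] at h
      exact h
    linear_combination -hthis
  rw [key]
  apply Submodule.add_mem
  · apply Submodule.smul_mem
    apply Submodule.sum_mem
    intro L hL
    simp only [hlines, Finset.mem_filter, Finset.mem_univ, true_and] at hL
    exact E_mem_Espan p (le_of_eq hL.1)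
  · apply Submodule.smul_mem
    exact E_mem_Espan p (by simp)

end RWcore


open Finset Module Submodule
open scoped Classical
set_option maxHeartbeats 1000000 in
lemma RWcore.core {𝔽 V : Type*} [Field 𝔽] [Fintype 𝔽] [AddCommGroup V] [Module 𝔽 V]
    [FiniteDimensional 𝔽 V] [Fintype V] [Fintype (Submodule 𝔽 V)]
    (b r s : ℕ) (hr : 0 < r) (hs : 0 < s)
    (k : Fin r → ℕ) (μ : Fin s → ℕ)
    (hkb : ∀ t, k t < b) (hμb : ∀ t, μ t < b)
    (hdisj : ∀ t t', k t ≠ μ t')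
    (p : ℕ) (hp : p.Prime) (hord : orderOf ((Fintype.card 𝔽 : ℕ) : ZMod p) = b)
    (𝓕 : Finset (Submodule 𝔽 V))
    (hdim : ∀ W ∈ 𝓕, ∃ t, finrank 𝔽 ↥W ≡ k t [MOD b])
    (hint : ∀ U ∈ 𝓕, ∀ W ∈ 𝓕, U ≠ W → ∃ t, finrank 𝔽 ↥(U ⊓ W) ≡ μ t [MOD b]) :
    𝓕.card + (Finset.univ.filter (fun B : Submodule 𝔽 V =>
        finrank 𝔽 ↥B + r ≤ s ∧ ∀ t, ¬ (finrank 𝔽 ↥B ≡ k t [MOD b]))).card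
      ≤ (Finset.univ.filter (fun A : Submodule 𝔽 V => finrank 𝔽 ↥A ≤ s)).card := by
  haveI : Fact p.Prime := ⟨hp⟩
  set q : ℕ := Fintype.card 𝔽 with hqdef
  -- basic facts about q mod p
  have hb1 : 1 ≤ b := lt_of_le_of_lt (Nat.zero_le _) (hkb ⟨0, hr⟩)
  have hqpow1 : ((q : ZMod p)) ^ b = 1 := hord ▸ pow_orderOf_eq_one _
  have hunit : IsUnit ((q : ZMod p)) := by
    apply IsUnit.of_mul_eq_one (((q:ZMod p)) ^ (b - 1))
    rw [← pow_succ', Nat.sub_add_cancel hb1]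
    exact hqpow1
  have hqpow : ∀ a c : ℕ, ((q : ZMod p) ^ a = (q : ZMod p) ^ c) ↔ a ≡ c [MOD b] := by
    intro a c
    obtain ⟨u, hu⟩ := hunit
    have h1 : ∀ m : ℕ, (q : ZMod p) ^ m = ((u ^ m : (ZMod p)ˣ) : ZMod p) := by
      intro m; rw [Units.val_pow_eq_pow_val, hu]
    rw [h1 a, h1 c]
    rw [← Units.ext_iff]
    rw [pow_eq_pow_iff_modEq]
    have : orderOf u = b := by rw [← orderOf_units, hu]; exact hord
    rw [this]
  have hlt_eq : ∀ x y : ℕ, x < b → y < b → x ≡ y [MOD b] → x = y := by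
    intro x y hx hy hxy
    have h1 : x % b = y % b := hxy
    rwa [Nat.mod_eq_of_lt hx, Nat.mod_eq_of_lt hy] at h1
  -- the vector families
  set fvec : Submodule 𝔽 V → (Submodule 𝔽 V → ZMod p) := fun W =>
    ∏ t : Fin s, (fun U => (q : ZMod p) ^ (finrank 𝔽 ↥(U ⊓ W)) - (q : ZMod p) ^ (μ t))
    with hfvec
  set gvec : Submodule 𝔽 V → (Submodule 𝔽 V → ZMod p) := fun B =>
    (∏ t : Fin r, (fun U : Submodule 𝔽 V => (q : ZMod p) ^ (finrank 𝔽 ↥U) - (q : ZMod p) ^ (k t)))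
      * RWcore.E p B with hgvec
  have fvec_apply : ∀ W U, fvec W U
      = ∏ t : Fin s, ((q : ZMod p) ^ (finrank 𝔽 ↥(U ⊓ W)) - (q : ZMod p) ^ (μ t)) := by
    intro W U; rw [hfvec]; simp
  have gvec_apply : ∀ B U, gvec B U
      = (∏ t : Fin r, ((q : ZMod p) ^ (finrank 𝔽 ↥U) - (q : ZMod p) ^ (k t)))
        * (if B ≤ U then 1 else 0) := by
    intro B U; rw [hgvec]; simp [RWcore.E]
  -- membership in the span
  have fvec_mem : ∀ W, fvec W ∈ RWcore.Espan (𝔽 := 𝔽) (V := V) p s := by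
    intro W
    rw [hfvec]
    have := RWcore.Espan_prod (𝔽 := 𝔽) (V := V) p (Finset.univ : Finset (Fin s))
      (fun t => (fun U => (q : ZMod p) ^ (finrank 𝔽 ↥(U ⊓ W)) - (q : ZMod p) ^ (μ t)))
      (fun t _ => RWcore.factor_mem p ((q : ZMod p) ^ (μ t)) W)
    simpa using this
  have hfac : ∀ c : ZMod p, (fun U : Submodule 𝔽 V =>
      (q : ZMod p) ^ (finrank 𝔽 ↥U) - c) ∈ RWcore.Espan (𝔽 := 𝔽) (V := V) p 1 := by
    intro c
    have h2 := RWcore.factor_mem p c (⊤ : Submodule 𝔽 V)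
    have h3 : (fun U : Submodule 𝔽 V =>
        (q : ZMod p) ^ (finrank 𝔽 ↥U) - c)
        = (fun U : Submodule 𝔽 V =>
        ((Fintype.card 𝔽 : ℕ) : ZMod p) ^ (finrank 𝔽 ↥(U ⊓ ⊤)) - c) := by
      funext U; rw [inf_top_eq]
    rw [h3]; exact h2
  have gvec_mem : ∀ B : Submodule 𝔽 V, finrank 𝔽 ↥B + r ≤ s →
      gvec B ∈ RWcore.Espan (𝔽 := 𝔽) (V := V) p s := by
    intro B hB
    rw [hgvec]
    have h1 : (∏ t : Fin r, (fun U : Submodule 𝔽 V =>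
        (q : ZMod p) ^ (finrank 𝔽 ↥U) - (q : ZMod p) ^ (k t)))
        ∈ RWcore.Espan (𝔽 := 𝔽) (V := V) p r := by
      have := RWcore.Espan_prod (𝔽 := 𝔽) (V := V) p (Finset.univ : Finset (Fin r))
        (fun t => (fun U : Submodule 𝔽 V => (q : ZMod p) ^ (finrank 𝔽 ↥U) - (q : ZMod p) ^ (k t)))
        (fun t _ => hfac ((q : ZMod p) ^ (k t)))
      simpa using this
    have h2 := RWcore.Espan_mul p h1 (RWcore.E_mem_Espan p (le_refl (finrank 𝔽 ↥B)))
    exact RWcore.Espan_mono p (by omega) h2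
  -- diagonal / off-diagonal values
  have fdiag : ∀ W ∈ 𝓕, fvec W W ≠ 0 := by
    intro W hW
    rw [fvec_apply, Finset.prod_ne_zero_iff]
    intro t _
    obtain ⟨t₀, ht₀⟩ := hdim W hW
    rw [inf_idem]
    intro hzero
    rw [sub_eq_zero] at hzero
    have h2 : finrank 𝔽 ↥W ≡ μ t [MOD b] := (hqpow _ _).mp hzero
    exact hdisj t₀ t (hlt_eq _ _ (hkb t₀) (hμb t) (ht₀.symm.trans h2))
  have foff : ∀ W ∈ 𝓕, ∀ W' ∈ 𝓕, W' ≠ W → fvec W' W = 0 := by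
    intro W hW W' hW' hne
    rw [fvec_apply]
    obtain ⟨t, ht⟩ := hint W hW W' hW' (fun h => hne h.symm)
    apply Finset.prod_eq_zero (Finset.mem_univ t)
    rw [sub_eq_zero]
    exact (hqpow _ _).mpr ht
  have gprod_zero : ∀ W ∈ 𝓕,
      (∏ t : Fin r, ((q:ZMod p) ^ finrank 𝔽 ↥W - (q:ZMod p) ^ k t)) = 0 := by
    intro W hW
    obtain ⟨t₀, ht₀⟩ := hdim W hW
    apply Finset.prod_eq_zero (Finset.mem_univ t₀)
    rw [sub_eq_zero]
    exact (hqpow _ _).mpr ht₀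
  have gdiag : ∀ B : Submodule 𝔽 V, (∀ t, ¬ (finrank 𝔽 ↥B ≡ k t [MOD b])) →
      (∏ t : Fin r, ((q:ZMod p) ^ finrank 𝔽 ↥B - (q:ZMod p) ^ k t)) ≠ 0 := by
    intro B hB
    rw [Finset.prod_ne_zero_iff]
    intro t _ hzero
    rw [sub_eq_zero] at hzero
    exact hB t ((hqpow _ _).mp hzero)
  -- the finite family
  set 𝓑 : Finset (Submodule 𝔽 V) := Finset.univ.filter (fun B : Submodule 𝔽 V =>
      finrank 𝔽 ↥B + r ≤ s ∧ ∀ t, ¬ (finrank 𝔽 ↥B ≡ k t [MOD b])) with h𝓑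
  set vfam : ({W // W ∈ 𝓕} ⊕ {B // B ∈ 𝓑}) → (Submodule 𝔽 V → ZMod p) :=
    Sum.elim (fun W => fvec W.val) (fun B => gvec B.val) with hvfam
  have hLI : LinearIndependent (ZMod p) vfam := by
    rw [Fintype.linearIndependent_iff]
    intro g hg
    have step1 : ∀ W₀ : {W // W ∈ 𝓕}, g (Sum.inl W₀) = 0 := by
      intro W₀
      have he2 : ∑ i : {W // W ∈ 𝓕} ⊕ {B // B ∈ 𝓑}, g i * vfam i W₀.val = 0 := by
        have := congrFun hg W₀.val
        simpa using this
      rw [Finset.sum_eq_single (Sum.inl W₀)] at he2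
      · rcases mul_eq_zero.mp he2 with h | h
        · exact h
        · exact absurd (by simpa [hvfam] using h) (fdiag W₀.val W₀.prop)
      · intro i _ hne
        match i with
        | Sum.inl W' =>
            have hne' : W'.val ≠ W₀.val := fun h => hne (by rw [Subtype.ext h])
            simp only [hvfam, Sum.elim_inl]
            rw [foff W₀.val W₀.prop W'.val W'.prop hne', mul_zero]
        | Sum.inr B =>
            simp only [hvfam, Sum.elim_inr]
            rw [gvec_apply, gprod_zero W₀.val W₀.prop, zero_mul, mul_zero]
      · intro h; exact absurd (Finset.mem_univ _) h
    have step2 : ∀ m : ℕ, ∀ B₀ : {B // B ∈ 𝓑}, finrank 𝔽 ↥(B₀.val) = m →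
        g (Sum.inr B₀) = 0 := by
      intro m
      induction m using Nat.strong_induction_on with
      | _ m IH =>
        intro B₀ hB₀
        have hB₀mem := Finset.mem_filter.mp B₀.prop
        have he2 : ∑ i : {W // W ∈ 𝓕} ⊕ {B // B ∈ 𝓑}, g i * vfam i B₀.val = 0 := by
          have := congrFun hg B₀.val
          simpa using this
        rw [Finset.sum_eq_single (Sum.inr B₀)] at he2
        · rcases mul_eq_zero.mp he2 with h | h
          · exact h
          · exfalso
            have hzero : gvec B₀.val B₀.val = 0 := by simpa [hvfam] using h
            rw [gvec_apply, if_pos le_rfl, mul_one] at hzero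
            exact gdiag B₀.val hB₀mem.2.2 hzero
        · intro i _ hne
          match i with
          | Sum.inl W => rw [step1 W, zero_mul]
          | Sum.inr B =>
            by_cases hle : B.val ≤ B₀.val
            · have hne' : B.val ≠ B₀.val := fun h => hne (by rw [Subtype.ext h])
              have hlt : B.val < B₀.val := lt_of_le_of_ne hle hne'
              have hrk : finrank 𝔽 ↥(B.val) < m :=
                hB₀ ▸ Submodule.finrank_lt_finrank_of_lt hlt
              rw [IH _ hrk B rfl, zero_mul]
            · simp only [hvfam, Sum.elim_inr]
              rw [gvec_apply, if_neg hle, mul_zero, mul_zero]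
        · intro h; exact absurd (Finset.mem_univ _) h
    intro i
    match i with
    | Sum.inl W => exact step1 W
    | Sum.inr B => exact step2 _ B rfl
  -- all vectors live in the span of low-dimension incidence vectors
  have hmemM : ∀ i, vfam i ∈ RWcore.Espan (𝔽 := 𝔽) (V := V) p s := by
    intro i
    match i with
    | Sum.inl W => exact fvec_mem W.val
    | Sum.inr B =>
      have hBm := Finset.mem_filter.mp B.prop
      exact gvec_mem B.val hBm.2.1
  have hseteq : RWcore.E (𝔽 := 𝔽) (V := V) p '' {A : Submodule 𝔽 V | finrank 𝔽 ↥A ≤ s}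
      = ↑((Finset.univ.filter (fun A : Submodule 𝔽 V => finrank 𝔽 ↥A ≤ s)).image
          (RWcore.E (𝔽 := 𝔽) (V := V) p)) := by
    rw [Finset.coe_image]
    congr 1
    ext A
    simp
  haveI : NeZero p := ⟨hp.ne_zero⟩
  haveI hMfin : Module.Finite (ZMod p)
      ↥(Submodule.span (ZMod p)
        (RWcore.E (𝔽 := 𝔽) (V := V) p '' {A : Submodule 𝔽 V | finrank 𝔽 ↥A ≤ s})) :=
    FiniteDimensional.span_of_finite _ ((Set.toFinite _).image _)
  set vfam' : ({W // W ∈ 𝓕} ⊕ {B // B ∈ 𝓑}) → ↥(RWcore.Espan (𝔽 := 𝔽) (V := V) p s) :=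
    fun i => ⟨vfam i, hmemM i⟩ with hvfam'
  have hLI' : LinearIndependent (ZMod p) vfam' :=
    LinearIndependent.of_comp (RWcore.Espan (𝔽 := 𝔽) (V := V) p s).subtype hLI
  haveI hMfin' : Module.Finite (ZMod p) ↥(RWcore.Espan (𝔽 := 𝔽) (V := V) p s) := hMfin
  have hcard := hLI'.fintype_card_le_finrank
  rw [Fintype.card_sum, Fintype.card_coe, Fintype.card_coe] at hcard
  have hfr : finrank (ZMod p)
      ↥(Submodule.span (ZMod p)
        (RWcore.E (𝔽 := 𝔽) (V := V) p '' {A : Submodule 𝔽 V | finrank 𝔽 ↥A ≤ s}))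
      ≤ (Finset.univ.filter (fun A : Submodule 𝔽 V => finrank 𝔽 ↥A ≤ s)).card := by
    rw [hseteq]
    exact le_trans (finrank_span_finset_le_card _) Finset.card_image_le
  exact le_trans hcard hfr

set_option maxHeartbeats 1000000 in
theorem generalized_modular_RW_subspaces_unrestricted
    {𝔽 V : Type*} [Field 𝔽] [Fintype 𝔽]
    [AddCommGroup V] [Module 𝔽 V] [FiniteDimensional 𝔽 V]
    (q n b r s : ℕ) (hq : Fintype.card 𝔽 = q) (hn : Module.finrank 𝔽 V = n)
    (hr : 0 < r) (hs : 0 < s)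
    (k : Fin r → ℕ) (μ : Fin s → ℕ)
    (hk : StrictMono k) (hμ : Function.Injective μ)
    (hkb : ∀ t, k t < b) (hμb : ∀ t, μ t < b)
    (hdisj : ∀ t t', k t ≠ μ t')
    (p : ℕ) (hp : p.Prime) (hord : orderOf (q : ZMod p) = b)
    (𝓕 : Finset (Submodule 𝔽 V))
    (hdim : ∀ W ∈ 𝓕, ∃ t, Module.finrank 𝔽 W ≡ k t [MOD b])
    (hint : ∀ U ∈ 𝓕, ∀ W ∈ 𝓕, U ≠ W →
      ∃ t, Module.finrank 𝔽 ↥(U ⊓ W) ≡ μ t [MOD b]) :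
    𝓕.card ≤ (∑ i ∈ Finset.range r, if i ≤ s then qchoose q n (s - i) else 0)
        + ∑ t : Fin r, qchoose q n (k t)
    ∧ (s < k ⟨0, hr⟩ + r →
        𝓕.card ≤ ∑ i ∈ Finset.range r, if i ≤ s then qchoose q n (s - i) else 0) := by
  subst hq
  subst hn
  haveI : Finite V := Module.finite_of_finite 𝔽
  haveI : Fintype V := Fintype.ofFinite V
  haveI : Finite (Submodule 𝔽 V) :=
    Finite.of_injective (fun A : Submodule 𝔽 V => (A : Set V)) SetLike.coe_injective
  haveI : Fintype (Submodule 𝔽 V) := Fintype.ofFinite _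
  -- r + s ≤ b
  have hrsb : r + s ≤ b := by
    have hinj : Function.Injective (Sum.elim (fun t : Fin r => (⟨k t, hkb t⟩ : Fin b))
        (fun t : Fin s => (⟨μ t, hμb t⟩ : Fin b))) := by
      intro x y hxy
      match x, y with
      | Sum.inl a, Sum.inl c =>
        simp only [Sum.elim_inl, Fin.mk.injEq] at hxy
        rw [hk.injective hxy]
      | Sum.inr a, Sum.inr c =>
        simp only [Sum.elim_inr, Fin.mk.injEq] at hxy
        rw [hμ hxy]
      | Sum.inl a, Sum.inr c =>
        simp only [Sum.elim_inl, Sum.elim_inr, Fin.mk.injEq] at hxy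
        exact absurd hxy (hdisj a c)
      | Sum.inr a, Sum.inl c =>
        simp only [Sum.elim_inl, Sum.elim_inr, Fin.mk.injEq] at hxy
        exact absurd hxy.symm (hdisj c a)
    have := Fintype.card_le_of_injective _ hinj
    simpa using this
  have hb1 : 1 ≤ b := lt_of_le_of_lt (Nat.zero_le _) (hkb ⟨0, hr⟩)
  have hlt_eq : ∀ x y : ℕ, x < b → y < b → x ≡ y [MOD b] → x = y := by
    intro x y hx hy hxy
    have h1 : x % b = y % b := hxy
    rwa [Nat.mod_eq_of_lt hx, Nat.mod_eq_of_lt hy] at h1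
  classical
  have key := RWcore.core b r s hr hs k μ hkb hμb hdisj p hp hord 𝓕 hdim hint
  -- dimension-class counts
  set F : ℕ → ℕ := fun j =>
    (Finset.univ.filter fun A : Submodule 𝔽 V => Module.finrank 𝔽 ↥A = j).card with hFdef
  have hF : ∀ j, F j = qchoose (Fintype.card 𝔽) (Module.finrank 𝔽 V) j := by
    intro j; rw [hFdef]; exact card_dim_eq j
  -- T as a sum over dimensions
  have hT : (Finset.univ.filter
        (fun A : Submodule 𝔽 V => Module.finrank 𝔽 ↥A ≤ s)).card
      = ∑ j ∈ Finset.range (s+1), F j := by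
    rw [Finset.card_eq_sum_card_fiberwise
      (f := fun A : Submodule 𝔽 V => Module.finrank 𝔽 ↥A) (t := Finset.range (s+1))
      (fun A hA => by
        simp only [Finset.mem_coe, Finset.mem_filter] at hA
        show Module.finrank 𝔽 ↥A ∈ Finset.range (s+1)
        exact Finset.mem_range.mpr (by omega))]
    refine Finset.sum_congr rfl fun j hj => ?_
    have hj' := Finset.mem_range.mp hj
    congr 1
    ext A
    simp only [Finset.mem_filter, Finset.mem_univ, true_and, Finset.filter_filter]
    constructor
    · exact fun h => h.2
    · exact fun h => ⟨by omega, h⟩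
  -- B as a sum over dimensions
  have hB : (Finset.univ.filter (fun B : Submodule 𝔽 V =>
        Module.finrank 𝔽 ↥B + r ≤ s ∧ ∀ t, ¬ (Module.finrank 𝔽 ↥B ≡ k t [MOD b]))).card
      = ∑ j ∈ Finset.range (s+1),
          if (j + r ≤ s ∧ ∀ t, ¬ (j ≡ k t [MOD b])) then F j else 0 := by
    rw [Finset.card_eq_sum_card_fiberwise
      (f := fun A : Submodule 𝔽 V => Module.finrank 𝔽 ↥A) (t := Finset.range (s+1))
      (fun A hA => by
        simp only [Finset.mem_coe, Finset.mem_filter] at hA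
        show Module.finrank 𝔽 ↥A ∈ Finset.range (s+1)
        exact Finset.mem_range.mpr (by omega))]
    refine Finset.sum_congr rfl fun j hj => ?_
    by_cases hc : (j + r ≤ s ∧ ∀ t, ¬ (j ≡ k t [MOD b]))
    · rw [if_pos hc, hFdef]
      congr 1
      ext A
      simp only [Finset.mem_filter, Finset.mem_univ, true_and, Finset.filter_filter]
      constructor
      · exact fun h => h.2
      · intro h
        refine ⟨?_, h⟩
        rw [h]
        exact hc
    · rw [if_neg hc]
      rw [Finset.card_eq_zero]
      rw [Finset.filter_filter]
      apply Finset.filter_false_of_mem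
      intro A _
      rintro ⟨⟨h1, h2⟩, h3⟩
      exact hc (by rw [← h3]; exact ⟨h1, h2⟩)
  rw [hT, hB] at key
  -- split the sum
  have hsplit : ∑ j ∈ Finset.range (s+1), F j
      = (∑ j ∈ Finset.range (s+1),
          if (j + r ≤ s ∧ ∀ t, ¬ (j ≡ k t [MOD b])) then F j else 0)
        + ∑ j ∈ Finset.range (s+1),
          ((if s < j + r then F j else 0)
            + (if (j + r ≤ s ∧ ∃ t, j ≡ k t [MOD b]) then F j else 0)) := by
    rw [← Finset.sum_add_distrib]
    refine Finset.sum_congr rfl fun j _ => ?_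
    by_cases h1 : s < j + r
    · rw [if_pos h1, if_neg (by omega), if_neg (by push_neg; intro h; omega)]
      omega
    · rw [if_neg h1]
      by_cases h2 : ∀ t, ¬ (j ≡ k t [MOD b])
      · rw [if_pos ⟨by omega, h2⟩, if_neg (by rintro ⟨_, t, ht⟩; exact h2 t ht)]
        omega
      · push_neg at h2
        rw [if_neg (by rintro ⟨_, hh⟩; obtain ⟨t, ht⟩ := h2; exact hh t ht),
          if_pos ⟨by omega, h2⟩]
        omega
  have main : 𝓕.card ≤ ∑ j ∈ Finset.range (s+1),
      ((if s < j + r then F j else 0)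
        + (if (j + r ≤ s ∧ ∃ t, j ≡ k t [MOD b]) then F j else 0)) := by omega
  rw [Finset.sum_add_distrib] at main
  -- identify the first sum
  have hSumA : ∑ j ∈ Finset.range (s+1), (if s < j + r then F j else 0)
      = ∑ i ∈ Finset.range r,
          if i ≤ s then qchoose (Fintype.card 𝔽) (Module.finrank 𝔽 V) (s - i) else 0 := by
    rw [← Finset.sum_filter, ← Finset.sum_filter]
    refine Finset.sum_nbij' (fun j => s - j) (fun i => s - i) ?_ ?_ ?_ ?_ ?_
    · intro j hj
      simp only [Finset.mem_filter, Finset.mem_range] at hj ⊢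
      omega
    · intro i hi
      simp only [Finset.mem_filter, Finset.mem_range] at hi ⊢
      omega
    · intro j hj
      simp only [Finset.mem_filter, Finset.mem_range] at hj
      show s - (s - j) = j
      omega
    · intro i hi
      simp only [Finset.mem_filter, Finset.mem_range] at hi
      show s - (s - i) = i
      omega
    · intro j hj
      simp only [Finset.mem_filter, Finset.mem_range] at hj
      show F j = qchoose (Fintype.card 𝔽) (Module.finrank 𝔽 V) (s - (s - j))
      rw [hF]
      congr 1
      omega
  -- bound the second sum
  have hSumB : ∑ j ∈ Finset.range (s+1),
        (if (j + r ≤ s ∧ ∃ t, j ≡ k t [MOD b]) then F j else 0)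
      ≤ ∑ t : Fin r, qchoose (Fintype.card 𝔽) (Module.finrank 𝔽 V) (k t) := by
    rw [← Finset.sum_filter]
    have hsub : (Finset.range (s+1)).filter
        (fun j => j + r ≤ s ∧ ∃ t, j ≡ k t [MOD b]) ⊆ Finset.image k Finset.univ := by
      intro j hj
      simp only [Finset.mem_filter, Finset.mem_range] at hj
      obtain ⟨hj1, ⟨hj2, t, ht⟩⟩ := hj
      have hjb : j < b := by omega
      have : j = k t := hlt_eq _ _ hjb (hkb t) ht
      exact Finset.mem_image.mpr ⟨t, Finset.mem_univ t, this.symm⟩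
    calc ∑ j ∈ (Finset.range (s+1)).filter
          (fun j => j + r ≤ s ∧ ∃ t, j ≡ k t [MOD b]), F j
        ≤ ∑ j ∈ Finset.image k Finset.univ, F j :=
          Finset.sum_le_sum_of_subset hsub
      _ = ∑ t : Fin r, F (k t) :=
          Finset.sum_image (fun x _ y _ h => hk.injective h)
      _ = ∑ t : Fin r, qchoose (Fintype.card 𝔽) (Module.finrank 𝔽 V) (k t) := by
          refine Finset.sum_congr rfl fun t _ => hF _
  constructor
  · calc 𝓕.card ≤ _ + _ := main
      _ ≤ _ := by rw [hSumA]; exact Nat.add_le_add_left hSumB _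
  · intro h2
    have hzero : ∑ j ∈ Finset.range (s+1),
        (if (j + r ≤ s ∧ ∃ t, j ≡ k t [MOD b]) then F j else 0) = 0 := by
      apply Finset.sum_eq_zero
      intro j hj
      rw [if_neg]
      rintro ⟨hj1, t, ht⟩
      have hjb : j < b := by omega
      have hjk : j = k t := hlt_eq _ _ hjb (hkb t) ht
      have hmono : k ⟨0, hr⟩ ≤ k t := hk.monotone (by
        rw [Fin.le_def]
        exact Nat.zero_le _)
      omega
    rw [hSumA, hzero] at main
    exact main.trans (Nat.le_of_eq (Nat.add_zero _))
end

section
/- Let b be a prime, Q ≥ 2 an integer, and let N be an m × m integer matrix such that each diagonal entry N_{ii} is divisible by [b]_Q and each off-diagonal entry N_{il} is congruent to [r_3]_Q modulo [b]_Q for a fixed r_3 with 1 ≤ r_3 ≤ b-1 and gcd([r_3]_Q, [b]_Q) = 1. Then det(N) ≡ (±1)·([r_3]_Q)^m·(m-1) (mod [b]_Q), and at least one of N or its top-left (m-1) × (m-1) submatrix has nonzero determinant; consequently rank(N) ≥ m - 1. -/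
lemma det_zero_diag {R : Type*} [CommRing R] {k : ℕ} (hk : 1 ≤ k) (r : R) :
    (Matrix.of fun i j : Fin k => if i = j then (0:R) else r).det
      = (-1)^(k-1) * r^k * ((k:R) - 1) := by
  obtain ⟨j, rfl⟩ := Nat.exists_eq_add_of_le hk
  have hM : (Matrix.of fun i l : Fin (1+j) => if i = l then (0:R) else r)
      = (-r) • (1 + Matrix.replicateCol Unit (fun _ : Fin (1+j) => (-1:R))
          * Matrix.replicateRow Unit (fun _ : Fin (1+j) => (1:R))) := by
    ext i l
    by_cases h : i = l <;>
      simp [h, Matrix.one_apply, Matrix.mul_apply, Matrix.replicateCol, Matrix.replicateRow]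
  rw [hM, Matrix.det_smul, Matrix.det_one_add_replicateCol_mul_replicateRow]
  simp only [dotProduct, Finset.sum_const, Finset.card_univ, Fintype.card_fin,
    nsmul_eq_mul, mul_neg, mul_one, Nat.add_sub_cancel_left]
  rw [neg_pow]
  push_cast
  ring

lemma aux_det_modeq (n : ℕ) (r : ℤ) {k : ℕ} (hk : 1 ≤ k) (M : Matrix (Fin k) (Fin k) ℤ)
    (hdiag : ∀ i, (n:ℤ) ∣ M i i) (hoff : ∀ i l, i ≠ l → M i l ≡ r [ZMOD (n:ℤ)]) :
    M.det ≡ (-1)^(k-1) * r^k * ((k:ℤ) - 1) [ZMOD (n:ℤ)] := by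
  have h1 : ((M.det : ℤ) : ZMod n) = ((M.map (Int.cast : ℤ → ZMod n)).det) :=
    RingHom.map_det (Int.castRingHom (ZMod n)) M
  have h2 : M.map (Int.cast : ℤ → ZMod n)
      = Matrix.of fun i j : Fin k => if i = j then (0 : ZMod n) else (r : ZMod n) := by
    ext i l
    by_cases h : i = l
    · subst h
      simpa [Matrix.map_apply, ZMod.intCast_zmod_eq_zero_iff_dvd] using hdiag i
    · simpa [Matrix.map_apply, h, ZMod.intCast_eq_intCast_iff] using hoff i l h
  rw [← ZMod.intCast_eq_intCast_iff]
  rw [h1, h2, det_zero_diag hk]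
  push_cast
  ring

lemma dvd_of_det_zero (n : ℕ) (r : ℤ) (hcop : IsCoprime r (n:ℤ)) {k : ℕ} (hk : 1 ≤ k)
    (M : Matrix (Fin k) (Fin k) ℤ) (hdiag : ∀ i, (n:ℤ) ∣ M i i)
    (hoff : ∀ i l, i ≠ l → M i l ≡ r [ZMOD (n:ℤ)]) (hdet : M.det = 0) :
    (n:ℤ) ∣ ((k:ℤ) - 1) := by
  have h := aux_det_modeq n r hk M hdiag hoff
  rw [hdet] at h
  have hx : (n:ℤ) ∣ (-1)^(k-1) * r^k * ((k:ℤ) - 1) := Int.modEq_zero_iff_dvd.mp h.symm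
  have hone : ((-1:ℤ)^(k-1)) * ((-1:ℤ)^(k-1)) = 1 := by
    rw [← pow_add]
    exact Even.neg_one_pow ⟨k-1, rfl⟩
  have hsq : ((-1:ℤ)^(k-1)) * ((-1:ℤ)^(k-1) * r^k * ((k:ℤ)-1)) = r^k * ((k:ℤ)-1) := by
    rw [show ((-1:ℤ)^(k-1)) * ((-1:ℤ)^(k-1) * r^k * ((k:ℤ)-1))
        = (((-1:ℤ)^(k-1)) * ((-1:ℤ)^(k-1))) * (r^k * ((k:ℤ)-1)) from by ring, hone, one_mul]
  have hx2 : (n:ℤ) ∣ r^k * ((k:ℤ)-1) := hsq ▸ hx.mul_left ((-1:ℤ)^(k-1))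
  exact (hcop.pow_left.symm).dvd_of_dvd_mul_left hx2

open Matrix in
lemma rank_submatrix_le' {k m : ℕ} (f : Fin k → Fin m) (A : Matrix (Fin m) (Fin m) ℚ) :
    (A.submatrix f f).rank ≤ A.rank := by
  set P : Matrix (Fin k) (Fin m) ℚ := Matrix.of fun i j => if f i = j then 1 else 0 with hP
  have hPA : A.submatrix f f = P * A * Pᵀ := by
    ext i j
    simp [Matrix.mul_apply, hP, Matrix.transpose_apply, ite_mul, mul_ite,
      Finset.sum_ite_eq, Finset.sum_ite_eq']
  rw [hPA]
  exact le_trans (Matrix.rank_mul_le_left _ _) (Matrix.rank_mul_le_right _ _)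

theorem det_mod_qint_and_rank
    (b Q r3 m : ℕ) (hb : b.Prime) (hQ : 2 ≤ Q) (hm : 1 ≤ m)
    (hr3 : 1 ≤ r3) (hr3' : r3 ≤ b - 1)
    (hgcd : Nat.gcd (qint Q r3) (qint Q b) = 1)
    (N : Matrix (Fin m) (Fin m) ℤ)
    (hdiag : ∀ i, (qint Q b : ℤ) ∣ N i i)
    (hoff : ∀ i l, i ≠ l → N i l ≡ (qint Q r3 : ℤ) [ZMOD (qint Q b : ℤ)]) :
    N.det ≡ (-1) ^ (m - 1) * (qint Q r3 : ℤ) ^ m * ((m : ℤ) - 1) [ZMOD (qint Q b : ℤ)]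
    ∧ (N.det ≠ 0 ∨
        (N.submatrix (Fin.castLE (Nat.sub_le m 1)) (Fin.castLE (Nat.sub_le m 1))).det ≠ 0)
    ∧ (m - 1 : ℕ) ≤ (N.map (Int.cast : ℤ → ℚ)).rank := by
  have hb2 : 2 ≤ b := hb.two_le
  have hn : 3 ≤ qint Q b := by
    have h12 : ∑ i ∈ Finset.range 2, Q ^ i ≤ ∑ i ∈ Finset.range b, Q ^ i :=
      Finset.sum_le_sum_of_subset (Finset.range_subset_range.mpr hb2)
    simp only [Finset.sum_range_succ, Finset.sum_range_zero, zero_add, pow_zero, pow_one] at h12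
    unfold qint
    omega
  have hcop : IsCoprime ((qint Q r3 : ℤ)) ((qint Q b : ℤ)) := by
    rw [Int.isCoprime_iff_gcd_eq_one]
    simpa using hgcd
  have h1 := aux_det_modeq (qint Q b) (qint Q r3 : ℤ) hm N hdiag hoff
  have hD : N.det ≠ 0 ∨
      (N.submatrix (Fin.castLE (Nat.sub_le m 1)) (Fin.castLE (Nat.sub_le m 1))).det ≠ 0 := by
    by_cases hdet : N.det = 0
    · right
      rcases Nat.lt_or_ge m 2 with hm2 | hm2
      · have hm1 : m - 1 = 0 := by omega
        haveI : IsEmpty (Fin (m-1)) := by rw [hm1]; infer_instance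
        rw [Matrix.det_isEmpty]
        exact one_ne_zero
      · intro hsub
        have d1 : (qint Q b : ℤ) ∣ ((m:ℤ) - 1) :=
          dvd_of_det_zero _ _ hcop hm N hdiag hoff hdet
        have d2' : (qint Q b : ℤ) ∣ (((m-1 : ℕ):ℤ) - 1) := by
          refine dvd_of_det_zero _ _ hcop (k := m-1) (by omega) _ (fun i => hdiag _)
            (fun i l hil => hoff _ _ ?_) hsub
          exact fun hc => hil (Fin.castLE_injective _ hc)
        have d2 : (qint Q b : ℤ) ∣ ((m:ℤ) - 2) := by
          have hcast : (((m-1 : ℕ)):ℤ) - 1 = (m:ℤ) - 2 := by omega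
          rwa [hcast] at d2'
        have hone : (qint Q b : ℤ) ∣ 1 := by
          have := d1.sub d2
          simpa using this
        have := Int.le_of_dvd one_pos hone
        omega
    · exact Or.inl hdet
  refine ⟨h1, hD, ?_⟩
  rcases hD with hdet | hsub
  · have hmap : (N.map (Int.cast : ℤ → ℚ)).det = (N.det : ℚ) :=
      (RingHom.map_det (Int.castRingHom ℚ) N).symm
    have hu : IsUnit (N.map (Int.cast : ℤ → ℚ)) := by
      rw [Matrix.isUnit_iff_isUnit_det, hmap]
      exact isUnit_iff_ne_zero.mpr (Int.cast_ne_zero.mpr hdet)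
    have := Matrix.rank_of_isUnit _ hu
    rw [this, Fintype.card_fin]
    omega
  · set f := Fin.castLE (Nat.sub_le m 1) with hf
    have hmapsub : (N.map (Int.cast : ℤ → ℚ)).submatrix f f
        = (N.submatrix f f).map (Int.cast : ℤ → ℚ) := rfl
    have hdetsub : ((N.submatrix f f).map (Int.cast : ℤ → ℚ)).det
        = ((N.submatrix f f).det : ℚ) := (RingHom.map_det (Int.castRingHom ℚ) _).symm
    have hu : IsUnit ((N.map (Int.cast : ℤ → ℚ)).submatrix f f) := by
      rw [Matrix.isUnit_iff_isUnit_det, hmapsub, hdetsub]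
      exact isUnit_iff_ne_zero.mpr (Int.cast_ne_zero.mpr hsub)
    have hr : ((N.map (Int.cast : ℤ → ℚ)).submatrix f f).rank = m - 1 := by
      rw [Matrix.rank_of_isUnit _ hu, Fintype.card_fin]
    rw [← hr]
    exact rank_submatrix_le' f _
end
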